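/- arXiv:1708.06080 — 2 statements merged into one kernel-verified Lean document; each statement's English description precedes it below -/
import Mathlib

section
/- For every v, w ∈ (0,1], every b ∈ ℕ₀ and every integer x ≤ b, the joint transform of the ruin time and the deficit at ruin, killed upon up-crossing b, satisfies E_x[v^{τ_{−1}^−} · w^{−X(τ_{−1}^−)}; τ_{−1}^− < τ_b^+] = Z_v(x,w) − (W_v(x)/W_v(b))·Z_v(b,w). -/
open MeasureTheory Set
open scoped ENNReal

noncomputable section

namespace RW

/-- Probability generating function of `p`. -/
def ptilde (p : ℕ → ℝ) (z : ℝ) : ℝ := ∑' k : ℕ, p k * z ^ k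

variable {Ω : Type*} [MeasurableSpace Ω]

/-- The upwards skip-free random walk started at `x` (driven by the claims `C`). -/
def walk (C : ℕ → Ω → ℕ) (x : ℤ) (n : ℕ) (ω : Ω) : ℤ :=
  x + n - ∑ i ∈ Finset.range n, (C i ω : ℤ)

/-- First passage time (weakly) below `b`, `= ⊤` if it never happens. -/
def tauMinus (C : ℕ → Ω → ℕ) (x b : ℤ) (ω : Ω) : ℕ∞ :=
  sInf ((fun n : ℕ => (n : ℕ∞)) '' {n : ℕ | walk C x n ω ≤ b})

/-- First passage time (weakly) above `b`, `= ⊤` if it never happens. -/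
def tauPlus (C : ℕ → Ω → ℕ) (x b : ℤ) (ω : Ω) : ℕ∞ :=
  sInf ((fun n : ℕ => (n : ℕ∞)) '' {n : ℕ | b ≤ walk C x n ω})

/-- `E[f ; A]`, the expectation of `f` on the event `A`. -/
def Eind (P : Measure Ω) (A : Set Ω) (f : Ω → ℝ) : ℝ := ∫ ω, A.indicator f ω ∂P

/-- The first scale function `W_v`. -/
def W (P : Measure Ω) (C : ℕ → Ω → ℕ) (v p0 : ℝ) (y : ℤ) : ℝ :=
  if 0 ≤ y then
    1 / (p0 * Eind P {ω | tauPlus C 0 y ω < tauMinus C 0 (-1) ω}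
          fun ω => v ^ (tauPlus C 0 y ω).toNat)
  else 0

/-- The joint transform of the ruin time and the deficit at ruin. -/
def Psi (P : Measure Ω) (C : ℕ → Ω → ℕ) (v w : ℝ) (x : ℤ) : ℝ :=
  Eind P {ω | tauMinus C x (-1) ω < ⊤}
    fun ω => v ^ (tauMinus C x (-1) ω).toNat *
      w ^ (-(walk C x (tauMinus C x (-1) ω).toNat ω))

/-- The second scale function `Z_v(·, w)` (normalized so that `Z_v(0,w) = 1`). -/
def Z (P : Measure Ω) (C : ℕ → Ω → ℕ) (v w p0 : ℝ) (x : ℤ) : ℝ :=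
  Psi P C v w x + p0 * (1 - Psi P C v w 0) * W P C v p0 x

/-- Cumulative capital injections of the walk reflected at `0`. -/
def Rstar (C : ℕ → Ω → ℕ) (x : ℤ) (n : ℕ) (ω : Ω) : ℤ :=
  max 0 (-(Finset.range (n + 1)).inf' Finset.nonempty_range_add_one fun m => walk C x m ω)

/-- First entrance time of the walk reflected at `0` into `[b, ∞)`. -/
def tauTildePlus (C : ℕ → Ω → ℕ) (x b : ℤ) (ω : Ω) : ℕ∞ :=
  sInf ((fun n : ℕ => (n : ℕ∞)) '' {n : ℕ | b ≤ walk C x n ω + Rstar C x n ω})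

/-- Cumulative dividends under the barrier policy at `b`. -/
def Rdiv (C : ℕ → Ω → ℕ) (x b : ℤ) (n : ℕ) (ω : Ω) : ℤ :=
  max 0 ((Finset.range (n + 1)).sup' Finset.nonempty_range_add_one fun m => walk C x m ω - b)

/-- Single-period dividends under the barrier policy at `b`. -/
def rdiv (C : ℕ → Ω → ℕ) (x b : ℤ) (n : ℕ) (ω : Ω) : ℤ :=
  Rdiv C x b n ω - if n = 0 then 0 else Rdiv C x b (n - 1) ω

/-- Ruin time of the walk reflected at the barrier `b`. -/
def Truin (C : ℕ → Ω → ℕ) (x b : ℤ) (ω : Ω) : ℕ∞ :=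
  sInf ((fun n : ℕ => (n : ℕ∞)) '' {n : ℕ | walk C x n ω - Rdiv C x b n ω ≤ -1})

lemma walk_stronglyMeasurable (C : ℕ → Ω → ℕ) (hC : ∀ i, Measurable (C i)) (x : ℤ) (n : ℕ) :
    StronglyMeasurable (walk C x n) := by
  have h : Measurable fun ω => ∑ i ∈ Finset.range n, (C i ω : ℤ) :=
    Finset.measurable_sum _ fun i _ => (measurable_from_top.comp (hC i))
  exact (measurable_const.sub h).stronglyMeasurable


/-! ### Auxiliary combinatorial development -/

/-- Deterministic walk driven by a sequence of claims. -/
def dwalk (x : ℤ) (c : ℕ → ℕ) (n : ℕ) : ℤ :=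
  x + n - ∑ i ∈ Finset.range n, (c i : ℤ)

/-- Finite words of claims. -/
abbrev Word : Type := Σ n : ℕ, Fin n → ℕ

/-- Extension of a word by zeros. -/
def wext (l : Word) (i : ℕ) : ℕ := if h : i < l.1 then l.2 ⟨i, h⟩ else 0

lemma word_ext {l l' : Word} (h1 : l.1 = l'.1) (h2 : ∀ i < l.1, wext l i = wext l' i) :
    l = l' := by
  obtain ⟨n, c⟩ := l; obtain ⟨n', c'⟩ := l'
  dsimp at h1; subst h1
  simp only [Sigma.mk.inj_iff, heq_eq_eq, true_and]
  funext i
  have := h2 i i.2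
  simpa [wext, i.2] using this

lemma dwalk_congr {x : ℤ} {c d : ℕ → ℕ} {n : ℕ} (h : ∀ i < n, c i = d i) :
    dwalk x c n = dwalk x d n := by
  unfold dwalk
  congr 1
  exact Finset.sum_congr rfl fun i hi => by rw [h i (Finset.mem_range.mp hi)]

@[simp] lemma dwalk_zero (x : ℤ) (c : ℕ → ℕ) : dwalk x c 0 = x := by simp [dwalk]

lemma dwalk_succ (x : ℤ) (c : ℕ → ℕ) (n : ℕ) :
    dwalk x c (n + 1) = dwalk x c n + 1 - c n := by
  simp [dwalk, Finset.sum_range_succ]; ring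

lemma dwalk_add (x : ℤ) (c : ℕ → ℕ) (m k : ℕ) :
    dwalk x c (m + k) = dwalk (dwalk x c m) (fun i => c (m + i)) k := by
  unfold dwalk
  rw [Finset.sum_range_add (fun i => (c i : ℤ)) m k]
  push_cast
  ring

/-- Skip-free: first passage above `b` happens exactly at `b`. -/
lemma first_cross_eq {x b : ℤ} {c : ℕ → ℕ} {n : ℕ} (hx : x ≤ b)
    (hlt : ∀ m < n, dwalk x c m < b) (hge : b ≤ dwalk x c n) : dwalk x c n = b := by
  rcases n with _ | m
  · simp at hge ⊢; omega
  · have h1 : dwalk x c m < b := hlt m (Nat.lt_succ_self m)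
    have h2 := dwalk_succ x c m
    have : (c m : ℤ) ≥ 0 := Int.natCast_nonneg _
    omega

/-- Concatenation of words. -/
def conc (l₁ l₂ : Word) : Word :=
  ⟨l₁.1 + l₂.1, fun i => if h : (i : ℕ) < l₁.1 then l₁.2 ⟨i, h⟩ else
    l₂.2 ⟨i - l₁.1, by omega⟩⟩

lemma wext_conc_left (l₁ l₂ : Word) {i : ℕ} (h : i < l₁.1) :
    wext (conc l₁ l₂) i = wext l₁ i := by
  simp [wext, conc, h, Nat.lt_of_lt_of_le h (Nat.le_add_right _ _)]

lemma wext_conc_right (l₁ l₂ : Word) {j : ℕ} (h : j < l₂.1) :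
    wext (conc l₁ l₂) (l₁.1 + j) = wext l₂ j := by
  have h1 : l₁.1 + j < l₁.1 + l₂.1 := by omega
  have h2 : ¬ (l₁.1 + j < l₁.1) := by omega
  simp [wext, conc, h1, h2, h]

lemma dwalk_conc_left (x : ℤ) (l₁ l₂ : Word) {m : ℕ} (h : m ≤ l₁.1) :
    dwalk x (wext (conc l₁ l₂)) m = dwalk x (wext l₁) m :=
  dwalk_congr fun i hi => wext_conc_left l₁ l₂ (lt_of_lt_of_le hi h)

lemma dwalk_conc_right (x : ℤ) (l₁ l₂ : Word) {j : ℕ} (h : j ≤ l₂.1) :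
    dwalk x (wext (conc l₁ l₂)) (l₁.1 + j) =
      dwalk (dwalk x (wext l₁) l₁.1) (wext l₂) j := by
  rw [dwalk_add, dwalk_conc_left x l₁ l₂ le_rfl]
  exact dwalk_congr fun i hi => wext_conc_right l₁ l₂ (lt_of_lt_of_le hi h)

/-- Take the first `m` letters. -/
def wtake (l : Word) (m : ℕ) (h : m ≤ l.1) : Word :=
  ⟨m, fun i => l.2 ⟨i, lt_of_lt_of_le i.2 h⟩⟩

/-- Drop the first `m` letters. -/
def wdrop (l : Word) (m : ℕ) : Word := ⟨l.1 - m, fun i => wext l (m + i)⟩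

lemma wext_wtake (l : Word) (m : ℕ) (h : m ≤ l.1) {i : ℕ} (hi : i < m) :
    wext (wtake l m h) i = wext l i := by
  simp [wext, wtake, hi, lt_of_lt_of_le hi h]

lemma wext_wdrop (l : Word) (m : ℕ) {j : ℕ} (hj : j < l.1 - m) :
    wext (wdrop l m) j = wext l (m + j) := by
  simp [wext, wdrop, hj]

lemma conc_wtake_wdrop (l : Word) (m : ℕ) (h : m ≤ l.1) :
    conc (wtake l m h) (wdrop l m) = l := by
  apply word_ext
  · simp [conc, wtake, wdrop]; omega
  · intro i hi
    have hi' : i < m + (l.1 - m) := by simpa [conc, wtake, wdrop] using hi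
    by_cases hc : i < m
    · rw [wext_conc_left _ _ hc, wext_wtake l m h hc]
    · have hj : i - m < (wdrop l m).1 := by simp only [wdrop]; omega
      have h2 := wext_conc_right (wtake l m h) (wdrop l m) hj
      have hm1 : (wtake l m h).1 = m := rfl
      rw [hm1] at h2
      rw [show i = m + (i - m) by omega, h2,
        wext_wdrop l m (by simp only [wdrop] at hj; exact hj)]

lemma dwalk_wtake (x : ℤ) (l : Word) (m : ℕ) (h : m ≤ l.1) {i : ℕ} (hi : i ≤ m) :
    dwalk x (wext (wtake l m h)) i = dwalk x (wext l) i :=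
  dwalk_congr fun j hj => wext_wtake l m h (lt_of_lt_of_le hj hi)

lemma dwalk_wdrop (x : ℤ) (l : Word) (m : ℕ) (hm : m ≤ l.1) {j : ℕ} (hj : j ≤ l.1 - m) :
    dwalk (dwalk x (wext l) m) (wext (wdrop l m)) j = dwalk x (wext l) (m + j) := by
  rw [dwalk_add]
  exact dwalk_congr fun i hi => wext_wdrop l m (lt_of_lt_of_le hi hj)


/-! ### Path predicates -/

/-- Ruin word: stays above `-1` strictly before the end, ends `≤ -1`. -/
def Ruin (x : ℤ) (l : Word) : Prop :=
  (∀ m < l.1, -1 < dwalk x (wext l) m) ∧ dwalk x (wext l) l.1 ≤ -1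

/-- Ladder word: reaches `b` exactly at the end, staying in `(-1, b)` before. -/
def Ladder (x b : ℤ) (l : Word) : Prop :=
  (∀ m < l.1, -1 < dwalk x (wext l) m ∧ dwalk x (wext l) m < b) ∧
    dwalk x (wext l) l.1 = b

/-- Ruin word staying strictly below `b`. -/
def RuinBelow (x b : ℤ) (l : Word) : Prop :=
  Ruin x l ∧ ∀ m < l.1, dwalk x (wext l) m < b

/-- Ruin word that up-crosses `b` before ruin. -/
def Cross (x b : ℤ) (l : Word) : Prop :=
  Ruin x l ∧ ∃ m < l.1, b ≤ dwalk x (wext l) m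

/-! ### Weights and sums -/

def wprob (p : ℕ → ℝ) (l : Word) : ℝ≥0∞ :=
  ∏ i ∈ Finset.range l.1, ENNReal.ofReal (p (wext l i))

/-- Real value of a ruin word. -/
def rtval (v w : ℝ) (x : ℤ) (l : Word) : ℝ :=
  v ^ l.1 * w ^ (-(dwalk x (wext l) l.1))

def tval (v w : ℝ) (x : ℤ) (l : Word) : ℝ≥0∞ := ENNReal.ofReal (rtval v w x l)

def sval (v : ℝ) (l : Word) : ℝ≥0∞ := ENNReal.ofReal (v ^ l.1)

def psiSum (p : ℕ → ℝ) (v w : ℝ) (x : ℤ) : ℝ≥0∞ :=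
  ∑' l : Word, {l | Ruin x l}.indicator (fun l => tval v w x l * wprob p l) l

def belowSum (p : ℕ → ℝ) (v w : ℝ) (x b : ℤ) : ℝ≥0∞ :=
  ∑' l : Word, {l | RuinBelow x b l}.indicator (fun l => tval v w x l * wprob p l) l

def crossSum (p : ℕ → ℝ) (v w : ℝ) (x b : ℤ) : ℝ≥0∞ :=
  ∑' l : Word, {l | Cross x b l}.indicator (fun l => tval v w x l * wprob p l) l

def ladSum (p : ℕ → ℝ) (v : ℝ) (x b : ℤ) : ℝ≥0∞ :=
  ∑' l : Word, {l | Ladder x b l}.indicator (fun l => sval v l * wprob p l) l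

lemma wprob_conc (p : ℕ → ℝ) (l₁ l₂ : Word) :
    wprob p (conc l₁ l₂) = wprob p l₁ * wprob p l₂ := by
  unfold wprob
  have h : (conc l₁ l₂).1 = l₁.1 + l₂.1 := rfl
  rw [h, Finset.prod_range_add]
  congr 1
  · exact Finset.prod_congr rfl fun i hi =>
      by rw [wext_conc_left l₁ l₂ (Finset.mem_range.mp hi)]
  · exact Finset.prod_congr rfl fun i hi =>
      by rw [wext_conc_right l₁ l₂ (Finset.mem_range.mp hi)]

lemma tval_conc {v w : ℝ} (hv : 0 ≤ v) {x b : ℤ} {l₁ l₂ : Word}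
    (h : dwalk x (wext l₁) l₁.1 = b) :
    tval v w x (conc l₁ l₂) = sval v l₁ * tval v w b l₂ := by
  unfold tval sval rtval
  have hlen : (conc l₁ l₂).1 = l₁.1 + l₂.1 := rfl
  have hend : dwalk x (wext (conc l₁ l₂)) (conc l₁ l₂).1 = dwalk b (wext l₂) l₂.1 := by
    rw [hlen, dwalk_conc_right x l₁ l₂ le_rfl, h]
  rw [hend, hlen, pow_add, ← ENNReal.ofReal_mul (by positivity), mul_assoc]

lemma sval_conc {v : ℝ} (hv : 0 ≤ v) (l₁ l₂ : Word) :
    sval v (conc l₁ l₂) = sval v l₁ * sval v l₂ := by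
  unfold sval
  have hlen : (conc l₁ l₂).1 = l₁.1 + l₂.1 := rfl
  rw [hlen, pow_add, ← ENNReal.ofReal_mul (by positivity)]

/-! ### Splitting a crossing ruin word -/

lemma cross_of_conc {x b : ℤ} (hb : 0 ≤ b) {l₁ l₂ : Word}
    (h1 : Ladder x b l₁) (h2 : Ruin b l₂) : Cross x b (conc l₁ l₂) := by
  obtain ⟨h1a, h1b⟩ := h1
  obtain ⟨h2a, h2b⟩ := h2
  have hlen : (conc l₁ l₂).1 = l₁.1 + l₂.1 := rfl
  have hpos : 0 < l₂.1 := by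
    rcases Nat.eq_zero_or_pos l₂.1 with h | h
    · exfalso; rw [h] at h2b; simp at h2b; omega
    · exact h
  constructor
  · constructor
    · intro m hm
      rw [hlen] at hm
      by_cases hc : m < l₁.1
      · rw [dwalk_conc_left x l₁ l₂ (le_of_lt hc)]; exact (h1a m hc).1
      · have hj : m - l₁.1 < l₂.1 := by omega
        have : m = l₁.1 + (m - l₁.1) := by omega
        rw [this, dwalk_conc_right x l₁ l₂ (le_of_lt hj), h1b]
        exact h2a _ hj
    · rw [hlen, dwalk_conc_right x l₁ l₂ le_rfl, h1b]; exact h2b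
  · refine ⟨l₁.1, by omega, ?_⟩
    rw [← Nat.add_zero l₁.1, dwalk_conc_right x l₁ l₂ (Nat.zero_le _), h1b]
    simp

lemma first_cross_of_conc {x b : ℤ} {l₁ l₂ : Word} (h1 : Ladder x b l₁) :
    (∀ j < l₁.1, dwalk x (wext (conc l₁ l₂)) j < b) ∧
      b ≤ dwalk x (wext (conc l₁ l₂)) l₁.1 := by
  constructor
  · intro j hj
    rw [dwalk_conc_left x l₁ l₂ (le_of_lt hj)]
    exact (h1.1 j hj).2
  · rw [← Nat.add_zero l₁.1, dwalk_conc_right x l₁ l₂ (Nat.zero_le _), h1.2]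
    simp

/-- Splitting a crossing ruin word at the first crossing time. -/
lemma cross_split {x b : ℤ} (hxb : x ≤ b) {l : Word} (h : Cross x b l) :
    ∃ m, ∃ hm : m ≤ l.1, Ladder x b (wtake l m hm) ∧ Ruin b (wdrop l m) := by
  obtain ⟨⟨hup, hend⟩, hex⟩ := h
  have hex' : ∃ m, b ≤ dwalk x (wext l) m := ⟨hex.choose, hex.choose_spec.2⟩
  classical
  set m := Nat.find hex' with hmdef
  have hmspec : b ≤ dwalk x (wext l) m := Nat.find_spec hex'
  have hmin : ∀ j < m, dwalk x (wext l) j < b := fun j hj =>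
    lt_of_not_ge (Nat.find_min hex' hj)
  have hmlt : m < l.1 := by
    obtain ⟨mw, hmw, hw⟩ := hex
    exact lt_of_le_of_lt (Nat.find_min' hex' hw) hmw
  have hmb : dwalk x (wext l) m = b := first_cross_eq hxb hmin hmspec
  refine ⟨m, le_of_lt hmlt, ⟨?_, ?_⟩, ?_, ?_⟩
  · intro j hj
    have hj' : j < m := hj
    rw [dwalk_wtake x l m (le_of_lt hmlt) (le_of_lt hj')]
    exact ⟨hup j (by omega), hmin j hj'⟩
  · show dwalk x (wext (wtake l m (le_of_lt hmlt))) m = b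
    rw [dwalk_wtake x l m (le_of_lt hmlt) le_rfl]; exact hmb
  · intro j hj
    have hj' : j < l.1 - m := hj
    have hd := dwalk_wdrop x l m (le_of_lt hmlt) (le_of_lt hj')
    rw [hmb] at hd
    rw [hd]
    exact hup (m + j) (by omega)
  · show dwalk b (wext (wdrop l m)) (l.1 - m) ≤ -1
    have hd := dwalk_wdrop x l m (le_of_lt hmlt) (le_refl (l.1 - m))
    rw [hmb] at hd
    rw [hd, show m + (l.1 - m) = l.1 by omega]
    exact hend

lemma first_cross_unique {c : ℕ → ℕ} {x b : ℤ} {m m' : ℕ}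
    (h1 : ∀ j < m, dwalk x c j < b) (h2 : b ≤ dwalk x c m)
    (h1' : ∀ j < m', dwalk x c j < b) (h2' : b ≤ dwalk x c m') : m = m' := by
  by_contra hne
  rcases Nat.lt_or_ge m m' with h | h
  · exact absurd h2 (not_le.mpr (h1' m h))
  · exact absurd h2' (not_le.mpr (h1 m' (by omega)))

lemma ladder_conc {x₀ x b : ℤ} (hxb : x ≤ b) {l₁ l₂ : Word}
    (h1 : Ladder x₀ x l₁) (h2 : Ladder x b l₂) : Ladder x₀ b (conc l₁ l₂) := by
  obtain ⟨h1a, h1b⟩ := h1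
  obtain ⟨h2a, h2b⟩ := h2
  have hlen : (conc l₁ l₂).1 = l₁.1 + l₂.1 := rfl
  constructor
  · intro m hm
    rw [hlen] at hm
    by_cases hc : m < l₁.1
    · rw [dwalk_conc_left x₀ l₁ l₂ (le_of_lt hc)]
      exact ⟨(h1a m hc).1, lt_of_lt_of_le (h1a m hc).2 hxb⟩
    · have hj : m - l₁.1 < l₂.1 := by omega
      have : m = l₁.1 + (m - l₁.1) := by omega
      rw [this, dwalk_conc_right x₀ l₁ l₂ (le_of_lt hj), h1b]
      exact h2a _ hj
  · rw [hlen, dwalk_conc_right x₀ l₁ l₂ le_rfl, h1b]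
    exact h2b

/-- Splitting a ladder word at the first passage of an intermediate level. -/
lemma ladder_split {x₀ x b : ℤ} (hx : x₀ ≤ x) {l : Word} (h : Ladder x₀ b l)
    (hxb : x ≤ b) :
    ∃ m, ∃ hm : m ≤ l.1, Ladder x₀ x (wtake l m hm) ∧ Ladder x b (wdrop l m) := by
  obtain ⟨hin, hend⟩ := h
  classical
  have hex' : ∃ m, x ≤ dwalk x₀ (wext l) m := ⟨l.1, by rw [hend]; exact hxb⟩
  set m := Nat.find hex' with hmdef
  have hmspec : x ≤ dwalk x₀ (wext l) m := Nat.find_spec hex'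
  have hmin : ∀ j < m, dwalk x₀ (wext l) j < x := fun j hj =>
    lt_of_not_ge (Nat.find_min hex' hj)
  have hmle : m ≤ l.1 := Nat.find_min' hex' (by rw [hend]; exact hxb)
  have hmb : dwalk x₀ (wext l) m = x := first_cross_eq hx hmin hmspec
  refine ⟨m, hmle, ⟨?_, ?_⟩, ?_, ?_⟩
  · intro j hj
    have hj' : j < m := hj
    rw [dwalk_wtake x₀ l m hmle (le_of_lt hj')]
    exact ⟨(hin j (by omega)).1, hmin j hj'⟩
  · show dwalk x₀ (wext (wtake l m hmle)) m = x
    rw [dwalk_wtake x₀ l m hmle le_rfl]; exact hmb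
  · intro j hj
    have hj' : j < l.1 - m := hj
    have hd := dwalk_wdrop x₀ l m hmle (le_of_lt hj')
    rw [hmb] at hd
    rw [hd]
    exact hin (m + j) (by omega)
  · show dwalk x (wext (wdrop l m)) (l.1 - m) = b
    have hd := dwalk_wdrop x₀ l m hmle (le_refl (l.1 - m))
    rw [hmb] at hd
    rw [hd, show m + (l.1 - m) = l.1 by omega]
    exact hend

lemma conc_inj {l₁ l₂ l₁' l₂' : Word} (h : l₁.1 = l₁'.1)
    (he : conc l₁ l₂ = conc l₁' l₂') : l₁ = l₁' ∧ l₂ = l₂' := by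
  have hlen : l₁.1 + l₂.1 = l₁'.1 + l₂'.1 := congrArg Sigma.fst he
  have h2 : l₂.1 = l₂'.1 := by omega
  constructor
  · refine word_ext h fun i hi => ?_
    rw [← wext_conc_left l₁ l₂ hi, he, wext_conc_left l₁' l₂' (h ▸ hi)]
  · refine word_ext h2 fun j hj => ?_
    rw [← wext_conc_right l₁ l₂ hj, he, h,
      wext_conc_right l₁' l₂' (h2 ▸ hj)]

lemma conc_len_unique {x lev : ℤ} {l₁ l₂ l₁' l₂' : Word}
    (h1 : Ladder x lev l₁) (h1' : Ladder x lev l₁')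
    (he : conc l₁ l₂ = conc l₁' l₂') : l₁.1 = l₁'.1 := by
  obtain ⟨ha, hb⟩ := first_cross_of_conc (l₂ := l₂) h1
  obtain ⟨ha', hb'⟩ := first_cross_of_conc (l₂ := l₂') h1'
  rw [← he] at ha' hb'
  exact first_cross_unique ha hb ha' hb'

/-- Generic concatenation/splitting identity for indicator sums over words. -/
lemma tsum_indicator_conc (A B C' : Word → Prop) (F G H : Word → ℝ≥0∞)
    (hconc : ∀ l₁ l₂, B l₁ → C' l₂ → A (conc l₁ l₂))
    (hsplit : ∀ l, A l → ∃ m, ∃ hm : m ≤ l.1, B (wtake l m hm) ∧ C' (wdrop l m))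
    (hlen : ∀ {l₁ l₂ l₁' l₂' : Word}, B l₁ → C' l₂ → B l₁' → C' l₂' →
      conc l₁ l₂ = conc l₁' l₂' → l₁.1 = l₁'.1)
    (hval : ∀ l₁ l₂, B l₁ → C' l₂ → F (conc l₁ l₂) = G l₁ * H l₂) :
    ∑' l : Word, {l | A l}.indicator F l
      = (∑' l : Word, {l | B l}.indicator G l) * (∑' l : Word, {l | C' l}.indicator H l) := by
  classical
  rw [← ENNReal.tsum_mul_right]
  simp_rw [← ENNReal.tsum_mul_left]
  set g : Word × Word → ℝ≥0∞ :=
    fun q => {l | B l}.indicator G q.1 * {l | C' l}.indicator H q.2 with hg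
  rw [← ENNReal.tsum_prod' (f := g)]
  have hBq : ∀ q : Word × Word, g q ≠ 0 → B q.1 ∧ C' q.2 := by
    intro q hq
    by_contra hc
    push_neg at hc
    rcases Classical.em (B q.1) with hB | hB
    · have := hc hB
      simp [hg, Set.indicator_of_notMem, this] at hq
    · simp [hg, Set.indicator_of_notMem, hB] at hq
  have key : ∀ q : Word × Word, B q.1 → C' q.2 →
      {l | A l}.indicator F (conc q.1 q.2) = g q := by
    intro q hB hC
    rw [Set.indicator_of_mem (show conc q.1 q.2 ∈ {l | A l} from hconc _ _ hB hC),
      hval _ _ hB hC, hg]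
    simp only []
    rw [Set.indicator_of_mem (show q.1 ∈ {l | B l} from hB),
      Set.indicator_of_mem (show q.2 ∈ {l | C' l} from hC)]
  refine tsum_eq_tsum_of_ne_zero_bij (fun q => conc q.1.1 q.1.2) ?_ ?_ ?_
  · rintro ⟨q, hq⟩ ⟨q', hq'⟩ he
    obtain ⟨hB, hC⟩ := hBq q hq
    obtain ⟨hB', hC'⟩ := hBq q' hq'
    simp only at he
    have h1 := hlen hB hC hB' hC' he
    obtain ⟨e1, e2⟩ := conc_inj h1 he
    exact Subtype.ext (Prod.ext e1 e2)
  · intro l hl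
    have hA : A l := by
      by_contra hc
      simp [Set.indicator_of_notMem, hc] at hl
    obtain ⟨m, hm, hB, hC⟩ := hsplit l hA
    have hcc := conc_wtake_wdrop l m hm
    have hgq : g (wtake l m hm, wdrop l m) ≠ 0 := by
      have := key (wtake l m hm, wdrop l m) hB hC
      rw [← this, hcc]
      exact hl
    exact ⟨⟨(wtake l m hm, wdrop l m), hgq⟩, hcc⟩
  · rintro ⟨q, hq⟩
    obtain ⟨hB, hC⟩ := hBq q hq
    exact key q hB hC

/-- The main splitting identity for crossing ruin words. -/
lemma crossSum_eq (p : ℕ → ℝ) {v : ℝ} (hv : 0 ≤ v) (w : ℝ) {x b : ℤ}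
    (hxb : x ≤ b) (hb : 0 ≤ b) :
    crossSum p v w x b = ladSum p v x b * psiSum p v w b := by
  refine tsum_indicator_conc _ _ _ _ _ _
    (fun l₁ l₂ h1 h2 => cross_of_conc hb h1 h2)
    (fun l h => cross_split hxb h)
    (fun h1 _ h1' _ he => conc_len_unique h1 h1' he)
    (fun l₁ l₂ h1 h2 => ?_)
  rw [tval_conc hv h1.2, wprob_conc]
  ring

/-- The splitting identity for ladder words. -/
lemma ladSum_eq (p : ℕ → ℝ) {v : ℝ} (hv : 0 ≤ v) {x₀ x b : ℤ}
    (hx : x₀ ≤ x) (hxb : x ≤ b) :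
    ladSum p v x₀ b = ladSum p v x₀ x * ladSum p v x b := by
  refine tsum_indicator_conc _ _ _ _ _ _
    (fun l₁ l₂ h1 h2 => ladder_conc hxb h1 h2)
    (fun l h => ladder_split hx h hxb)
    (fun h1 _ h1' _ he => conc_len_unique h1 h1' he)
    (fun l₁ l₂ h1 h2 => ?_)
  rw [sval_conc hv, wprob_conc]
  ring

/-- Decomposition of ruin words according to whether they cross `b`. -/
lemma psiSum_split (p : ℕ → ℝ) (v w : ℝ) (x b : ℤ) :
    psiSum p v w x = belowSum p v w x b + crossSum p v w x b := by
  rw [psiSum, belowSum, crossSum, ← ENNReal.tsum_add]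
  refine tsum_congr fun l => ?_
  classical
  by_cases hR : Ruin x l
  · by_cases hB : ∀ m < l.1, dwalk x (wext l) m < b
    · rw [Set.indicator_of_mem (show l ∈ {l | Ruin x l} from hR),
        Set.indicator_of_mem (show l ∈ {l | RuinBelow x b l} from ⟨hR, hB⟩),
        Set.indicator_of_notMem (show l ∉ {l | Cross x b l} from ?_)]
      · rw [add_zero]
      · rintro ⟨-, m, hm, hge⟩
        exact absurd (hB m hm) (not_lt.mpr hge)
    · push_neg at hB
      obtain ⟨m, hm, hge⟩ := hB
      rw [Set.indicator_of_mem (show l ∈ {l | Ruin x l} from hR),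
        Set.indicator_of_notMem (show l ∉ {l | RuinBelow x b l} from ?_),
        Set.indicator_of_mem (show l ∈ {l | Cross x b l} from ⟨hR, m, hm, hge⟩)]
      · rw [zero_add]
      · rintro ⟨-, hB'⟩
        exact absurd (hB' m hm) (not_lt.mpr hge)
  · rw [Set.indicator_of_notMem (show l ∉ {l | Ruin x l} from hR),
      Set.indicator_of_notMem (show l ∉ {l | RuinBelow x b l} from fun h => hR h.1),
      Set.indicator_of_notMem (show l ∉ {l | Cross x b l} from fun h => hR h.1),
      add_zero]



/-- Cylinder event determined by a word. -/
def Cyl (C : ℕ → Ω → ℕ) (l : Word) : Set Ω := {ω | ∀ i < l.1, C i ω = wext l i}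

lemma cyl_eq_biInter (C : ℕ → Ω → ℕ) (l : Word) :
    Cyl C l = ⋂ i ∈ Finset.range l.1, C i ⁻¹' {wext l i} := by
  ext ω
  simp [Cyl, Finset.mem_range]

lemma measurableSet_cyl (C : ℕ → Ω → ℕ) (hC : ∀ i, Measurable (C i)) (l : Word) :
    MeasurableSet (Cyl C l) := by
  rw [cyl_eq_biInter]
  exact MeasurableSet.biInter (Finset.range l.1).countable_toSet
    fun i _ => (hC i) (measurableSet_singleton _)

lemma meas_cyl (P : Measure Ω) [IsProbabilityMeasure P] (C : ℕ → Ω → ℕ) (p : ℕ → ℝ)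
    (hindep : ProbabilityTheory.iIndepFun C P)
    (hdist : ∀ i k, P {ω | C i ω = k} = ENNReal.ofReal (p k)) (l : Word) :
    P (Cyl C l) = wprob p l := by
  rw [cyl_eq_biInter,
    hindep.meas_biInter (fun i _ => ⟨{wext l i}, measurableSet_singleton _, rfl⟩)]
  refine Finset.prod_congr rfl fun i _ => ?_
  rw [show C i ⁻¹' {wext l i} = {ω | C i ω = wext l i} from rfl, hdist i (wext l i)]

lemma walk_eq_dwalk {C : ℕ → Ω → ℕ} {l : Word} {ω : Ω} (hω : ω ∈ Cyl C l)
    {x : ℤ} {m : ℕ} (hm : m ≤ l.1) : walk C x m ω = dwalk x (wext l) m := by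
  unfold walk dwalk
  congr 1
  refine Finset.sum_congr rfl fun i hi => ?_
  rw [hω i (lt_of_lt_of_le (Finset.mem_range.mp hi) hm)]

/-! ### First passage times via `sInf` -/

lemma sInf_image_eq_coe {S : Set ℕ} {n : ℕ} (hn : n ∈ S) (hmin : ∀ m < n, m ∉ S) :
    sInf ((fun k : ℕ => (k : ℕ∞)) '' S) = n := by
  apply le_antisymm
  · exact sInf_le ⟨n, hn, rfl⟩
  · refine le_sInf ?_
    rintro a ⟨m, hm, rfl⟩
    have : n ≤ m := not_lt.mp fun h => hmin m h hm
    show (n : ℕ∞) ≤ (m : ℕ∞)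
    exact_mod_cast this

lemma coe_lt_sInf_image {S : Set ℕ} {n : ℕ} (h : ∀ m ≤ n, m ∉ S) :
    (n : ℕ∞) < sInf ((fun k : ℕ => (k : ℕ∞)) '' S) := by
  have h1 : ((n + 1 : ℕ) : ℕ∞) ≤ sInf ((fun k : ℕ => (k : ℕ∞)) '' S) := by
    refine le_sInf ?_
    rintro a ⟨m, hm, rfl⟩
    have : n + 1 ≤ m := by
      by_contra hc
      exact h m (by omega) hm
    show ((n + 1 : ℕ) : ℕ∞) ≤ (m : ℕ∞)
    exact_mod_cast this
  refine lt_of_lt_of_le ?_ h1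
  exact_mod_cast Nat.lt_succ_self n

lemma not_mem_of_coe_lt_sInf {S : Set ℕ} {n : ℕ}
    (h : (n : ℕ∞) < sInf ((fun k : ℕ => (k : ℕ∞)) '' S)) : ∀ m ≤ n, m ∉ S := by
  intro m hm hmS
  have h1 : sInf ((fun k : ℕ => (k : ℕ∞)) '' S) ≤ m := sInf_le ⟨m, hmS, rfl⟩
  have h2 : (m : ℕ∞) ≤ n := by exact_mod_cast hm
  exact absurd (lt_of_le_of_lt (h1.trans h2) h) (lt_irrefl _)

lemma nonempty_of_sInf_lt_top {S : Set ℕ}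
    (h : sInf ((fun k : ℕ => (k : ℕ∞)) '' S) < ⊤) : S.Nonempty := by
  by_contra hc
  rw [Set.not_nonempty_iff_eq_empty] at hc
  rw [hc] at h
  simp at h

/-! ### Disjointness of cylinders determined by path predicates -/

lemma cyl_disjoint (C : ℕ → Ω → ℕ) (x : ℤ) (Q : Word → Prop) (Pin Pout : ℤ → Prop)
    (hQin : ∀ l, Q l → ∀ m < l.1, Pin (dwalk x (wext l) m))
    (hQout : ∀ l, Q l → Pout (dwalk x (wext l) l.1))
    (hcontra : ∀ z, Pin z → Pout z → False) :
    ∀ l l', Q l → Q l' → l ≠ l' → Disjoint (Cyl C l) (Cyl C l') := by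
  have main : ∀ l l', Q l → Q l' → l.1 < l'.1 → ∀ ω, ω ∈ Cyl C l → ω ∉ Cyl C l' := by
    intro l l' hQl hQl' h ω hω hω'
    have e1 : dwalk x (wext l) l.1 = dwalk x (wext l') l.1 := by
      rw [← walk_eq_dwalk hω le_rfl, walk_eq_dwalk hω' (le_of_lt h)]
    have := hQin l' hQl' l.1 h
    rw [← e1] at this
    exact hcontra _ this (hQout l hQl)
  intro l l' hQl hQl' hne
  rw [Set.disjoint_left]
  intro ω hω hω'
  rcases lt_trichotomy l.1 l'.1 with h | h | h
  · exact main l l' hQl hQl' h ω hω hω'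
  · refine hne (word_ext h fun i hi => ?_)
    rw [← hω i hi, hω' i (h ▸ hi)]
  · exact main l' l hQl' hQl h ω hω' hω

/-! ### Master lemma : expectations as sums over words -/

lemma sum_cyl_le_one (P : Measure Ω) [IsProbabilityMeasure P]
    (C : ℕ → Ω → ℕ) (hC : ∀ i, Measurable (C i)) (Q : Word → Prop)
    (h3 : ∀ l l', Q l → Q l' → l ≠ l' → Disjoint (Cyl C l) (Cyl C l')) :
    ∑' l : Word, {l | Q l}.indicator (fun l => P (Cyl C l)) l ≤ 1 := by
  have hdisj : Pairwise (Function.onFun Disjoint fun l : {l : Word // Q l} => Cyl C l.1) := by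
    intro a b hab
    exact h3 a.1 b.1 a.2 b.2 (fun h => hab (Subtype.ext h))
  have h0 : ∑' l : Word, {l | Q l}.indicator (fun l => P (Cyl C l)) l
      = P (⋃ l : {l : Word // Q l}, Cyl C l.1) := by
    rw [← tsum_subtype {l : Word | Q l} (fun l => P (Cyl C l))]
    exact (measure_iUnion hdisj fun l => measurableSet_cyl C hC l.1).symm
  rw [h0]
  exact prob_le_one

lemma eind_eq_tsum (P : Measure Ω) [IsProbabilityMeasure P]
    (C : ℕ → Ω → ℕ) (hC : ∀ i, Measurable (C i)) (A : Set Ω) (f : Ω → ℝ)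
    (Q : Word → Prop) (φ : Word → ℝ)
    (hφ : ∀ l, Q l → 0 ≤ φ l ∧ φ l ≤ 1)
    (h1 : ∀ l, Q l → ∀ ω ∈ Cyl C l, ω ∈ A ∧ f ω = φ l)
    (h2 : ∀ ω ∈ A, ∃ l, Q l ∧ ω ∈ Cyl C l)
    (h3 : ∀ l l', Q l → Q l' → l ≠ l' → Disjoint (Cyl C l) (Cyl C l')) :
    Eind P A f
      = (∑' l : Word, {l | Q l}.indicator
          (fun l => ENNReal.ofReal (φ l) * P (Cyl C l)) l).toReal
    ∧ (∑' l : Word, {l | Q l}.indicator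
          (fun l => ENNReal.ofReal (φ l) * P (Cyl C l)) l) ≤ 1 := by
  classical
  set F : Word → Ω → ℝ :=
    fun l ω => if Q l then (Cyl C l).indicator (fun _ => φ l) ω else 0 with hF
  have hbound : (∑' l : Word, {l | Q l}.indicator
      (fun l => ENNReal.ofReal (φ l) * P (Cyl C l)) l) ≤ 1 := by
    refine le_trans (Summable.tsum_le_tsum (fun l => ?_) ENNReal.summable ENNReal.summable)
      (sum_cyl_le_one P C hC Q h3)
    by_cases hQ : Q l
    · rw [Set.indicator_of_mem (show l ∈ {l | Q l} from hQ),
        Set.indicator_of_mem (show l ∈ {l | Q l} from hQ)]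
      calc ENNReal.ofReal (φ l) * P (Cyl C l) ≤ 1 * P (Cyl C l) :=
            mul_le_mul_left (ENNReal.ofReal_le_one.mpr (hφ l hQ).2) _
        _ = P (Cyl C l) := one_mul _
    · rw [Set.indicator_of_notMem (show l ∉ {l | Q l} from hQ),
        Set.indicator_of_notMem (show l ∉ {l | Q l} from hQ)]
  refine ⟨?_, hbound⟩
  have hpt : ∀ ω, A.indicator f ω = ∑' l : Word, F l ω := by
    intro ω
    by_cases hA : ω ∈ A
    · obtain ⟨l₀, hQ₀, hc₀⟩ := h2 ω hA
      rw [Set.indicator_of_mem hA,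
        tsum_eq_single l₀ (fun l hne => ?_)]
      · rw [hF]
        simp only [if_pos hQ₀]
        rw [Set.indicator_of_mem hc₀, (h1 l₀ hQ₀ ω hc₀).2]
      · by_cases hQ : Q l
        · rw [hF]
          simp only [if_pos hQ]
          refine Set.indicator_of_notMem (fun hc => ?_) _
          exact Set.disjoint_left.mp (h3 l l₀ hQ hQ₀ hne) hc hc₀
        · simp [hF, hQ]
    · rw [Set.indicator_of_notMem hA]
      symm
      have : ∀ l : Word, F l ω = 0 := by
        intro l
        by_cases hQ : Q l
        · rw [hF]
          simp only [if_pos hQ]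
          exact Set.indicator_of_notMem (fun hc => hA (h1 l hQ ω hc).1) _
        · simp [hF, hQ]
      simp [this]
  have hmeas : ∀ l : Word, AEStronglyMeasurable (F l) P := by
    intro l
    by_cases hQ : Q l
    · rw [hF]
      simp only [if_pos hQ]
      exact (stronglyMeasurable_const.indicator
        (measurableSet_cyl C hC l)).aestronglyMeasurable
    · simp only [hF, if_neg hQ]
      exact aestronglyMeasurable_const
  have hptle : ∀ l (a : Ω), (‖F l a‖₊ : ℝ≥0∞) ≤ (Cyl C l).indicator
      (fun _ => ({l | Q l}.indicator (fun _ => (1 : ℝ≥0∞)) l)) a := by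
    intro l a
    by_cases hQ : Q l
    · by_cases hc : a ∈ Cyl C l
      · rw [Set.indicator_of_mem hc, Set.indicator_of_mem (show l ∈ {l | Q l} from hQ)]
        rw [hF]
        simp only [if_pos hQ, Set.indicator_of_mem hc]
        have h0 := (hφ l hQ).1
        rw [← enorm_eq_nnnorm, Real.enorm_eq_ofReal h0]
        exact ENNReal.ofReal_le_one.mpr (hφ l hQ).2
      · rw [Set.indicator_of_notMem hc]
        rw [hF]
        simp only [if_pos hQ, Set.indicator_of_notMem hc]
        simp
    · simp only [hF, if_neg hQ]
      simp
  have hint : ∀ l : Word, ∫⁻ a, (‖F l a‖₊ : ℝ≥0∞) ∂P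
      ≤ {l | Q l}.indicator (fun l => P (Cyl C l)) l := by
    intro l
    refine le_trans (lintegral_mono (hptle l)) ?_
    rw [lintegral_indicator (measurableSet_cyl C hC l), setLIntegral_const]
    by_cases hQ : Q l
    · rw [Set.indicator_of_mem (show l ∈ {l | Q l} from hQ),
        Set.indicator_of_mem (show l ∈ {l | Q l} from hQ), one_mul]
    · rw [Set.indicator_of_notMem (show l ∉ {l | Q l} from hQ),
        Set.indicator_of_notMem (show l ∉ {l | Q l} from hQ), zero_mul]
  have hfin : (∑' l : Word, ∫⁻ a, (‖F l a‖₊ : ℝ≥0∞) ∂P) ≠ ⊤ := by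
    refine ne_top_of_le_ne_top (by simp : (1 : ℝ≥0∞) ≠ ⊤) ?_
    exact le_trans (Summable.tsum_le_tsum hint ENNReal.summable ENNReal.summable)
      (sum_cyl_le_one P C hC Q h3)
  have key : Eind P A f = ∑' l : Word, ∫ ω, F l ω ∂P := by
    rw [Eind, ← integral_tsum hmeas hfin]
    exact integral_congr_ae (Filter.EventuallyEq.of_eq (funext hpt))
  rw [key]
  have hterm : ∀ l : Word, ∫ ω, F l ω ∂P
      = ({l | Q l}.indicator (fun l => ENNReal.ofReal (φ l) * P (Cyl C l)) l).toReal := by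
    intro l
    by_cases hQ : Q l
    · rw [hF]
      simp only [if_pos hQ]
      rw [integral_indicator_const (φ l) (measurableSet_cyl C hC l),
        Set.indicator_of_mem (show l ∈ {l | Q l} from hQ),
        ENNReal.toReal_mul, ENNReal.toReal_ofReal (hφ l hQ).1, smul_eq_mul, mul_comm]
      rfl
    · simp only [hF, if_neg hQ]
      rw [Set.indicator_of_notMem (show l ∉ {l | Q l} from hQ)]
      simp
  rw [ENNReal.tsum_toReal_eq]
  · exact tsum_congr hterm
  · intro l
    by_cases hQ : Q l
    · rw [Set.indicator_of_mem (show l ∈ {l | Q l} from hQ)]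
      exact ENNReal.mul_ne_top ENNReal.ofReal_ne_top (measure_ne_top P _)
    · rw [Set.indicator_of_notMem (show l ∉ {l | Q l} from hQ)]
      simp


/-! ### Bounds on word values -/

lemma rtval_bounds {v w : ℝ} (hv : 0 < v) (hv1 : v ≤ 1) (hw : 0 < w) (hw1 : w ≤ 1)
    {x : ℤ} {l : Word} (hend : dwalk x (wext l) l.1 ≤ -1) :
    0 ≤ rtval v w x l ∧ rtval v w x l ≤ 1 := by
  unfold rtval
  set k : ℤ := -(dwalk x (wext l) l.1) with hk
  have hk0 : 0 ≤ k := by omega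
  have h1 : v ^ l.1 ≤ 1 := pow_le_one₀ hv.le hv1
  have h2 : w ^ k ≤ 1 := by
    rw [show k = (k.toNat : ℤ) from (Int.toNat_of_nonneg hk0).symm, zpow_natCast]
    exact pow_le_one₀ hw.le hw1
  exact ⟨mul_nonneg (pow_nonneg hv.le _) (zpow_nonneg hw.le _),
    mul_le_one₀ h1 (zpow_nonneg hw.le _) h2⟩

/-! ### Expectations as word sums -/

lemma eind_psi (P : Measure Ω) [IsProbabilityMeasure P] (C : ℕ → Ω → ℕ) (p : ℕ → ℝ)
    (hC : ∀ i, Measurable (C i))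
    (hindep : ProbabilityTheory.iIndepFun C P)
    (hdist : ∀ i k, P {ω | C i ω = k} = ENNReal.ofReal (p k))
    {v w : ℝ} (hv : 0 < v) (hv1 : v ≤ 1) (hw : 0 < w) (hw1 : w ≤ 1) (x : ℤ) :
    Eind P {ω | tauMinus C x (-1) ω < ⊤}
        (fun ω => v ^ (tauMinus C x (-1) ω).toNat *
          w ^ (-(walk C x (tauMinus C x (-1) ω).toNat ω)))
      = (psiSum p v w x).toReal ∧ psiSum p v w x ≤ 1 := by
  classical
  have hfun : (fun l => ENNReal.ofReal (rtval v w x l) * P (Cyl C l))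
      = fun l => tval v w x l * wprob p l := by
    funext l
    rw [meas_cyl P C p hindep hdist l]
    rfl
  have := eind_eq_tsum P C hC {ω | tauMinus C x (-1) ω < ⊤}
    (fun ω => v ^ (tauMinus C x (-1) ω).toNat *
      w ^ (-(walk C x (tauMinus C x (-1) ω).toNat ω)))
    (Ruin x) (rtval v w x)
    (fun l hQ => rtval_bounds hv hv1 hw hw1 hQ.2)
    ?_ ?_ ?_
  · rw [hfun] at this
    exact this
  · -- h1
    intro l hQ ω hω
    obtain ⟨hin, hend⟩ := hQ
    have hwalk : ∀ m ≤ l.1, walk C x m ω = dwalk x (wext l) m :=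
      fun m hm => walk_eq_dwalk hω hm
    have htau : tauMinus C x (-1) ω = (l.1 : ℕ∞) := by
      apply sInf_image_eq_coe
      · show walk C x l.1 ω ≤ -1
        rw [hwalk _ le_rfl]; exact hend
      · intro m hm hmem
        have h' : walk C x m ω ≤ -1 := hmem
        rw [hwalk m (le_of_lt hm)] at h'
        exact absurd h' (not_le.mpr (hin m hm))
    refine ⟨?_, ?_⟩
    · show tauMinus C x (-1) ω < ⊤
      rw [htau]
      exact lt_of_le_of_ne le_top (by simp)
    · show v ^ (tauMinus C x (-1) ω).toNat *
          w ^ (-(walk C x (tauMinus C x (-1) ω).toNat ω)) = rtval v w x l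
      rw [htau]
      simp only [ENat.toNat_coe]
      rw [hwalk _ le_rfl]
      rfl
  · -- h2
    intro ω hA
    have hA' : tauMinus C x (-1) ω < ⊤ := hA
    have hne : {n : ℕ | walk C x n ω ≤ -1}.Nonempty := nonempty_of_sInf_lt_top hA'
    have hfind : ∃ n, walk C x n ω ≤ -1 := hne
    set n := Nat.find hfind with hn
    refine ⟨⟨n, fun i => C i ω⟩, ⟨?_, ?_⟩, ?_⟩
    · intro m hm
      have hm' : m < n := hm
      have h' : ¬ walk C x m ω ≤ -1 := Nat.find_min hfind hm'
      have hcyl : ω ∈ Cyl C ⟨n, fun i => C i ω⟩ := fun i hi => by simp [wext, hi]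
      rw [walk_eq_dwalk hcyl (le_of_lt hm')] at h'
      omega
    · have hspec : walk C x n ω ≤ -1 := Nat.find_spec hfind
      have hcyl : ω ∈ Cyl C ⟨n, fun i => C i ω⟩ := fun i hi => by simp [wext, hi]
      rw [walk_eq_dwalk hcyl le_rfl] at hspec
      exact hspec
    · intro i hi
      simp [wext, hi]
  · -- h3
    exact cyl_disjoint C x (Ruin x) (fun z => -1 < z) (fun z => z ≤ -1)
      (fun l h => h.1) (fun l h => h.2) (fun z h1 h2 => absurd h2 (not_le.mpr h1))

lemma eind_lad (P : Measure Ω) [IsProbabilityMeasure P] (C : ℕ → Ω → ℕ) (p : ℕ → ℝ)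
    (hC : ∀ i, Measurable (C i))
    (hindep : ProbabilityTheory.iIndepFun C P)
    (hdist : ∀ i k, P {ω | C i ω = k} = ENNReal.ofReal (p k))
    {v : ℝ} (hv : 0 < v) (hv1 : v ≤ 1) {x b : ℤ} (hxb : x ≤ b) (hb : 0 ≤ b) :
    Eind P {ω | tauPlus C x b ω < tauMinus C x (-1) ω}
        (fun ω => v ^ (tauPlus C x b ω).toNat)
      = (ladSum p v x b).toReal ∧ ladSum p v x b ≤ 1 := by
  classical
  have hfun : (fun l : Word => ENNReal.ofReal (v ^ l.1) * P (Cyl C l))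
      = fun l => sval v l * wprob p l := by
    funext l
    rw [meas_cyl P C p hindep hdist l]
    rfl
  have := eind_eq_tsum P C hC {ω | tauPlus C x b ω < tauMinus C x (-1) ω}
    (fun ω => v ^ (tauPlus C x b ω).toNat)
    (Ladder x b) (fun l => v ^ l.1)
    (fun l _ => ⟨pow_nonneg hv.le _, pow_le_one₀ hv.le hv1⟩)
    ?_ ?_ ?_
  · rw [hfun] at this
    exact this
  · -- h1
    intro l hQ ω hω
    obtain ⟨hin, hend⟩ := hQ
    have hwalk : ∀ m ≤ l.1, walk C x m ω = dwalk x (wext l) m :=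
      fun m hm => walk_eq_dwalk hω hm
    have htau : tauPlus C x b ω = (l.1 : ℕ∞) := by
      apply sInf_image_eq_coe
      · show b ≤ walk C x l.1 ω
        rw [hwalk _ le_rfl, hend]
      · intro m hm hmem
        have h' : b ≤ walk C x m ω := hmem
        rw [hwalk m (le_of_lt hm)] at h'
        exact absurd h' (not_le.mpr (hin m hm).2)
    have hlt : ((l.1 : ℕ∞)) < tauMinus C x (-1) ω := by
      apply coe_lt_sInf_image
      intro m hm hmem
      have h' : walk C x m ω ≤ -1 := hmem
      rw [hwalk m hm] at h'
      rcases lt_or_eq_of_le hm with h | h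
      · exact absurd h' (not_le.mpr (hin m h).1)
      · rw [h, hend] at h'
        omega
    refine ⟨?_, ?_⟩
    · show tauPlus C x b ω < tauMinus C x (-1) ω
      rw [htau]
      exact hlt
    · show v ^ (tauPlus C x b ω).toNat = v ^ l.1
      rw [htau]
      simp [ENat.toNat_coe]
  · -- h2
    intro ω hA
    have hA' : tauPlus C x b ω < tauMinus C x (-1) ω := hA
    have hne : {n : ℕ | b ≤ walk C x n ω}.Nonempty :=
      nonempty_of_sInf_lt_top (lt_of_lt_of_le hA' le_top)
    have hfind : ∃ n, b ≤ walk C x n ω := hne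
    set n := Nat.find hfind with hn
    have hcyl : ω ∈ Cyl C ⟨n, fun i => C i ω⟩ := fun i hi => by simp [wext, hi]
    have htau : tauPlus C x b ω = (n : ℕ∞) :=
      sInf_image_eq_coe (Nat.find_spec hfind) (fun m hm => Nat.find_min hfind hm)
    rw [htau] at hA'
    have hnm : ∀ m ≤ n, ¬ walk C x m ω ≤ -1 := not_mem_of_coe_lt_sInf hA'
    refine ⟨⟨n, fun i => C i ω⟩, ⟨?_, ?_⟩, hcyl⟩
    · intro m hm
      have hm' : m < n := hm
      constructor
      · have := hnm m (le_of_lt hm')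
        rw [walk_eq_dwalk hcyl (le_of_lt hm')] at this
        omega
      · have : ¬ b ≤ walk C x m ω := Nat.find_min hfind hm'
        rw [walk_eq_dwalk hcyl (le_of_lt hm')] at this
        omega
    · refine first_cross_eq hxb (fun m hm => ?_) ?_
      · have hm' : m < n := hm
        have : ¬ b ≤ walk C x m ω := Nat.find_min hfind hm'
        rw [walk_eq_dwalk hcyl (le_of_lt hm')] at this
        omega
      · have := Nat.find_spec hfind
        rw [walk_eq_dwalk hcyl le_rfl] at this
        exact this
  · -- h3
    exact cyl_disjoint C x (Ladder x b) (fun z => z < b) (fun z => z = b)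
      (fun l h m hm => (h.1 m hm).2) (fun l h => h.2)
      (fun z h1 h2 => absurd h2 (ne_of_lt h1))

lemma eind_below (P : Measure Ω) [IsProbabilityMeasure P] (C : ℕ → Ω → ℕ) (p : ℕ → ℝ)
    (hC : ∀ i, Measurable (C i))
    (hindep : ProbabilityTheory.iIndepFun C P)
    (hdist : ∀ i k, P {ω | C i ω = k} = ENNReal.ofReal (p k))
    {v w : ℝ} (hv : 0 < v) (hv1 : v ≤ 1) (hw : 0 < w) (hw1 : w ≤ 1)
    {x b : ℤ} (hb : 0 ≤ b) :
    Eind P {ω | tauMinus C x (-1) ω < tauPlus C x b ω}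
        (fun ω => v ^ (tauMinus C x (-1) ω).toNat *
          w ^ (-(walk C x (tauMinus C x (-1) ω).toNat ω)))
      = (belowSum p v w x b).toReal ∧ belowSum p v w x b ≤ 1 := by
  classical
  have hfun : (fun l => ENNReal.ofReal (rtval v w x l) * P (Cyl C l))
      = fun l => tval v w x l * wprob p l := by
    funext l
    rw [meas_cyl P C p hindep hdist l]
    rfl
  have := eind_eq_tsum P C hC {ω | tauMinus C x (-1) ω < tauPlus C x b ω}
    (fun ω => v ^ (tauMinus C x (-1) ω).toNat *
      w ^ (-(walk C x (tauMinus C x (-1) ω).toNat ω)))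
    (RuinBelow x b) (rtval v w x)
    (fun l hQ => rtval_bounds hv hv1 hw hw1 hQ.1.2)
    ?_ ?_ ?_
  · rw [hfun] at this
    exact this
  · -- h1
    intro l hQ ω hω
    obtain ⟨⟨hin, hend⟩, hbel⟩ := hQ
    have hwalk : ∀ m ≤ l.1, walk C x m ω = dwalk x (wext l) m :=
      fun m hm => walk_eq_dwalk hω hm
    have htau : tauMinus C x (-1) ω = (l.1 : ℕ∞) := by
      apply sInf_image_eq_coe
      · show walk C x l.1 ω ≤ -1
        rw [hwalk _ le_rfl]; exact hend
      · intro m hm hmem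
        have h' : walk C x m ω ≤ -1 := hmem
        rw [hwalk m (le_of_lt hm)] at h'
        exact absurd h' (not_le.mpr (hin m hm))
    have hlt : ((l.1 : ℕ∞)) < tauPlus C x b ω := by
      apply coe_lt_sInf_image
      intro m hm hmem
      have h' : b ≤ walk C x m ω := hmem
      rw [hwalk m hm] at h'
      rcases lt_or_eq_of_le hm with h | h
      · exact absurd h' (not_le.mpr (hbel m h))
      · rw [h] at h'
        omega
    refine ⟨?_, ?_⟩
    · show tauMinus C x (-1) ω < tauPlus C x b ω
      rw [htau]
      exact hlt
    · show v ^ (tauMinus C x (-1) ω).toNat *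
          w ^ (-(walk C x (tauMinus C x (-1) ω).toNat ω)) = rtval v w x l
      rw [htau]
      simp only [ENat.toNat_coe]
      rw [hwalk _ le_rfl]
      rfl
  · -- h2
    intro ω hA
    have hA' : tauMinus C x (-1) ω < tauPlus C x b ω := hA
    have hne : {n : ℕ | walk C x n ω ≤ -1}.Nonempty :=
      nonempty_of_sInf_lt_top (lt_of_lt_of_le hA' le_top)
    have hfind : ∃ n, walk C x n ω ≤ -1 := hne
    set n := Nat.find hfind with hn
    have hcyl : ω ∈ Cyl C ⟨n, fun i => C i ω⟩ := fun i hi => by simp [wext, hi]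
    have htau : tauMinus C x (-1) ω = (n : ℕ∞) :=
      sInf_image_eq_coe (Nat.find_spec hfind) (fun m hm => Nat.find_min hfind hm)
    rw [htau] at hA'
    have hnm : ∀ m ≤ n, ¬ b ≤ walk C x m ω := not_mem_of_coe_lt_sInf hA'
    refine ⟨⟨n, fun i => C i ω⟩, ⟨⟨?_, ?_⟩, ?_⟩, hcyl⟩
    · intro m hm
      have hm' : m < n := hm
      have h' : ¬ walk C x m ω ≤ -1 := Nat.find_min hfind hm'
      rw [walk_eq_dwalk hcyl (le_of_lt hm')] at h'
      omega
    · have hspec : walk C x n ω ≤ -1 := Nat.find_spec hfind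
      rw [walk_eq_dwalk hcyl le_rfl] at hspec
      exact hspec
    · intro m hm
      have hm' : m < n := hm
      have := hnm m (le_of_lt hm')
      rw [walk_eq_dwalk hcyl (le_of_lt hm')] at this
      omega
  · -- h3
    exact cyl_disjoint C x (RuinBelow x b) (fun z => -1 < z) (fun z => z ≤ -1)
      (fun l h => h.1.1) (fun l h => h.1.2) (fun z h1 h2 => absurd h2 (not_le.mpr h1))


/-! ### Positivity of the ladder sum -/

lemma ladSum_pos (p : ℕ → ℝ) (hp0 : 0 < p 0) {v : ℝ} (hv : 0 < v)
    {x : ℤ} (hx : 0 ≤ x) : 0 < ladSum p v 0 x := by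
  classical
  set l0 : Word := ⟨x.toNat, fun _ => 0⟩ with hl0
  have hwext : ∀ i, wext l0 i = 0 := by
    intro i
    unfold wext
    split <;> rfl
  have hdw : ∀ m, dwalk 0 (wext l0) m = m := by
    intro m
    unfold dwalk
    rw [Finset.sum_eq_zero (fun i _ => by rw [hwext i]; rfl)]
    ring
  have hQ : Ladder 0 x l0 := by
    constructor
    · intro m hm
      have hm' : m < x.toNat := hm
      rw [hdw m]
      constructor
      · omega
      · omega
    · show dwalk 0 (wext l0) x.toNat = x
      rw [hdw]
      omega
  have hterm : 0 < {l | Ladder 0 x l}.indicator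
      (fun l => sval v l * wprob p l) l0 := by
    rw [Set.indicator_of_mem (show l0 ∈ {l | Ladder 0 x l} from hQ)]
    refine ENNReal.mul_pos ?_ ?_
    · simp only [sval]
      exact ne_of_gt (ENNReal.ofReal_pos.mpr (pow_pos hv _))
    · unfold wprob
      refine ne_of_gt (CanonicallyOrderedAdd.prod_pos.mpr fun i _ => ?_)
      rw [hwext i]
      exact ENNReal.ofReal_pos.mpr hp0
  exact lt_of_lt_of_le hterm (ENNReal.le_tsum l0)

lemma ladSum_neg_eq_zero (p : ℕ → ℝ) (v : ℝ) {x b : ℤ} (hx : x < 0) (hb : 0 ≤ b) :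
    ladSum p v x b = 0 := by
  unfold ladSum
  rw [ENNReal.summable.tsum_eq_zero_iff]
  intro l
  refine Set.indicator_of_notMem (fun hQ => ?_) _
  obtain ⟨hin, hend⟩ := hQ
  rcases Nat.eq_zero_or_pos l.1 with h | h
  · rw [h] at hend
    simp at hend
    omega
  · have := (hin 0 h).1
    simp at this
    omega


/-- Joint transform of ruin time and deficit at ruin, killed at the upper level `b`:
`E_x[v^(τ_(-1)^-) w^(-X(τ_(-1)^-)); τ_(-1)^- < τ_b^+] = Z_v(x,w) - (W_v(x)/W_v(b))·Z_v(b,w)`. -/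
theorem deficit_at_ruin_two_sided
    (P : Measure Ω) [IsProbabilityMeasure P]
    (C : ℕ → Ω → ℕ) (p : ℕ → ℝ)
    (hC : ∀ i, Measurable (C i))
    (hindep : ProbabilityTheory.iIndepFun C P)
    (hdist : ∀ i k, P {ω | C i ω = k} = ENNReal.ofReal (p k))
    (hnn : ∀ k, 0 ≤ p k) (hsum : ∑' k, p k = 1) (hp0 : 0 < p 0) :
    ∀ v ∈ Set.Ioc (0 : ℝ) 1, ∀ w ∈ Set.Ioc (0 : ℝ) 1, ∀ (b : ℕ) (x : ℤ), x ≤ (b : ℤ) →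
      Eind P {ω | tauMinus C x (-1) ω < tauPlus C x b ω}
          (fun ω => v ^ (tauMinus C x (-1) ω).toNat *
            w ^ (-(walk C x (tauMinus C x (-1) ω).toNat ω)))
        = Z P C v w (p 0) x - W P C v (p 0) x / W P C v (p 0) b * Z P C v w (p 0) b := by
  intro v hv w hw b x hxb
  obtain ⟨hv0, hv1⟩ := hv
  obtain ⟨hw0, hw1⟩ := hw
  have hb0 : (0 : ℤ) ≤ (b : ℤ) := Int.natCast_nonneg b
  have hpsix := eind_psi P C p hC hindep hdist hv0 hv1 hw0 hw1 x
  have hpsib := eind_psi P C p hC hindep hdist hv0 hv1 hw0 hw1 (b : ℤ)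
  have hbel := eind_below P C p hC hindep hdist hv0 hv1 hw0 hw1 (x := x) (b := (b : ℤ)) hb0
  have hladxb := eind_lad P C p hC hindep hdist hv0 hv1 hxb hb0
  have hladb := eind_lad P C p hC hindep hdist hv0 hv1 hb0 hb0
  have fone : (1 : ℝ≥0∞) ≠ ⊤ := ENNReal.one_ne_top
  have fbel : belowSum p v w x b ≠ ⊤ := ne_top_of_le_ne_top fone hbel.2
  have fpsib : psiSum p v w (b : ℤ) ≠ ⊤ := ne_top_of_le_ne_top fone hpsib.2
  have fladxb : ladSum p v x b ≠ ⊤ := ne_top_of_le_ne_top fone hladxb.2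
  have fladb : ladSum p v 0 (b : ℤ) ≠ ⊤ := ne_top_of_le_ne_top fone hladb.2
  have hId1 : psiSum p v w x = belowSum p v w x b + ladSum p v x b * psiSum p v w b := by
    rw [psiSum_split p v w x (b : ℤ), crossSum_eq p hv0.le w hxb hb0]
  have hId1R : (psiSum p v w x).toReal
      = (belowSum p v w x b).toReal + (ladSum p v x b).toReal * (psiSum p v w (b:ℤ)).toReal := by
    rw [hId1, ENNReal.toReal_add fbel (ENNReal.mul_ne_top fladxb fpsib), ENNReal.toReal_mul]
  rw [hbel.1]
  simp only [Z]
  rw [show Psi P C v w x = (psiSum p v w x).toReal from hpsix.1,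
    show Psi P C v w (b : ℤ) = (psiSum p v w (b : ℤ)).toReal from hpsib.1]
  rcases le_or_gt 0 x with hx | hx
  · -- case 0 ≤ x
    have hladx := eind_lad P C p hC hindep hdist hv0 hv1 hx hx
    have fladx : ladSum p v 0 x ≠ ⊤ := ne_top_of_le_ne_top fone hladx.2
    have hgx : 0 < (ladSum p v 0 x).toReal :=
      ENNReal.toReal_pos (ne_of_gt (ladSum_pos p hp0 hv0 hx)) fladx
    have hgb : 0 < (ladSum p v 0 (b : ℤ)).toReal :=
      ENNReal.toReal_pos (ne_of_gt (ladSum_pos p hp0 hv0 hb0)) fladb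
    have hId2R : (ladSum p v 0 (b : ℤ)).toReal
        = (ladSum p v 0 x).toReal * (ladSum p v x b).toReal := by
      rw [ladSum_eq p hv0.le hx hxb, ENNReal.toReal_mul]
    have hh : 0 < (ladSum p v x b).toReal := by
      rw [hId2R] at hgb
      rcases mul_pos_iff.mp hgb with ⟨_, hh⟩ | ⟨h1, _⟩
      · exact hh
      · linarith
    have hWx : W P C v (p 0) x = 1 / (p 0 * (ladSum p v 0 x).toReal) := by
      unfold W
      rw [if_pos hx, hladx.1]
    have hWb : W P C v (p 0) (b : ℤ) = 1 / (p 0 * (ladSum p v 0 (b : ℤ)).toReal) := by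
      unfold W
      rw [if_pos hb0, hladb.1]
    rw [hWx, hWb, hId1R, hId2R]
    field_simp
    ring
  · -- case x < 0
    have hWx : W P C v (p 0) x = 0 := by
      unfold W
      rw [if_neg (not_le.mpr hx)]
    rw [hWx]
    simp only [mul_zero, add_zero, zero_div, zero_mul, sub_zero]
    rw [hId1R, ladSum_neg_eq_zero p v hx hb0]
    simp


end RW
end
end

section
/- Assume min(p_0 + p_1, v) < 1, and let v ∈ (0,1], b ∈ ℕ₀ and x ∈ ℤ with x ≤ b. Then W_v(b+1) > W_v(b), and the expected discounted dividends until ruin under the barrier policy at b satisfy E_x[Σ_{i=0}^{T−1} v^i r(i)] = W_v(x)/(W_v(b+1) − W_v(b)). -/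
open MeasureTheory Set
open scoped ENNReal

open scoped ENNReal

namespace RWAux

/-- Position after consuming the word `w`, starting from `s`. -/
def posL (s : ℤ) (w : List ℕ) : ℤ := s + w.length - (w.sum : ℤ)

@[simp] lemma posL_nil (s : ℤ) : posL s [] = s := by simp [posL]

lemma posL_append (s : ℤ) (u t : List ℕ) : posL s (u ++ t) = posL (posL s u) t := by
  simp [posL]; push_cast; ring

lemma posL_take_succ (s : ℤ) (w : List ℕ) {k : ℕ} (hk : k < w.length) :
    posL s (w.take (k + 1)) = posL s (w.take k) + 1 - w[k] := by
  rw [List.take_succ, List.getElem?_eq_getElem hk, posL_append]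
  simp [posL]

lemma posL_take_succ_le (s : ℤ) (w : List ℕ) (k : ℕ) :
    posL s (w.take (k + 1)) ≤ posL s (w.take k) + 1 := by
  rcases lt_or_ge k w.length with h | h
  · rw [posL_take_succ s w h]; have : (0:ℤ) ≤ w[k] := Int.ofNat_nonneg _; omega
  · rw [List.take_of_length_le h, List.take_of_length_le (le_trans h (Nat.le_succ _))]; omega

/-- Admissible first-passage words from `s` to `y`, staying in `[0, y)` strictly before the end. -/
def Adm (s y : ℤ) (w : List ℕ) : Prop :=
  (∀ m < w.length, 0 ≤ posL s (w.take m) ∧ posL s (w.take m) < y) ∧ posL s w = y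

lemma Adm.nil (s : ℤ) : Adm s s [] := ⟨fun m hm => by simp at hm, by simp⟩

lemma Adm.eq_nil {s : ℤ} {w : List ℕ} (h : Adm s s w) : w = [] := by
  cases w with
  | nil => rfl
  | cons c t =>
    have := (h.1 0 (by simp)).2
    simp only [List.take_zero, posL_nil] at this
    exact absurd this (lt_irrefl s)

section wt
variable (vh : ℝ≥0∞) (ph : ℕ → ℝ≥0∞)

/-- Weight of a word: `v^|w| ∏ p_{w i}`. -/
noncomputable def wt (w : List ℕ) : ℝ≥0∞ := vh ^ w.length * (w.map ph).prod

lemma wt_append (u t : List ℕ) : wt vh ph (u ++ t) = wt vh ph u * wt vh ph t := by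
  simp [wt, pow_add]; ring

/-- The combinatorial two-barrier first-passage transform. -/
noncomputable def A (s y : ℤ) : ℝ≥0∞ := ∑' w : {w : List ℕ // Adm s y w}, wt vh ph (w : List ℕ)

end wt

lemma adm_append {a b c : ℤ} {u t : List ℕ} (hbc : b ≤ c)
    (hu : Adm a b u) (ht : Adm b c t) : Adm a c (u ++ t) := by
  constructor
  · intro m hm
    rcases lt_or_ge m u.length with h | h
    · rw [List.take_append_of_le_length (le_of_lt h)]
      have := hu.1 m h; omega
    · obtain ⟨j, rfl⟩ : ∃ j, m = u.length + j := ⟨m - u.length, by omega⟩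
      rw [List.take_length_add_append, posL_append, hu.2]
      have hj : j < t.length := by
        simp only [List.length_append] at hm; omega
      exact ht.1 j hj
  · rw [posL_append, hu.2, ht.2]

lemma adm_split {a b c : ℤ} {w : List ℕ} (hab : a ≤ b) (hbc : b ≤ c) (hw : Adm a c w) :
    ∃ u t, Adm a b u ∧ Adm b c t ∧ u ++ t = w := by
  classical
  have hPex : ∃ m, b ≤ posL a (w.take m) := ⟨w.length, by rw [List.take_of_length_le le_rfl, hw.2]; exact hbc⟩
  set m := Nat.find hPex with hmdef
  have hm : b ≤ posL a (w.take m) := Nat.find_spec hPex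
  have hmin : ∀ m' < m, posL a (w.take m') < b := by
    intro m' hm'
    have := Nat.find_min hPex hm'
    omega
  have hmlen : m ≤ w.length := Nat.find_le (by rw [List.take_of_length_le le_rfl, hw.2]; exact hbc)
  have hpos : posL a (w.take m) = b := by
    rcases Nat.eq_zero_or_pos m with h0 | h0
    · rw [h0] at hm ⊢; simp at hm ⊢; omega
    · obtain ⟨k, hk⟩ := Nat.exists_eq_succ_of_ne_zero (Nat.pos_iff_ne_zero.mp h0)
      have h1 := posL_take_succ_le a w k
      have h2 := hmin k (by omega)
      rw [hk, Nat.succ_eq_add_one] at hm ⊢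
      omega
  refine ⟨w.take m, w.drop m, ⟨?_, hpos⟩, ⟨?_, ?_⟩, List.take_append_drop m w⟩
  · intro m' hm'
    rw [List.length_take] at hm'
    have hm'm : m' < m := lt_of_lt_of_le hm' (min_le_left _ _)
    rw [List.take_take, min_eq_left (le_of_lt hm'm)]
    exact ⟨(hw.1 m' (lt_of_lt_of_le hm'm hmlen)).1, hmin m' hm'm⟩
  · intro j hj
    have hkey : posL b ((w.drop m).take j) = posL a (w.take (m + j)) := by
      rw [List.take_add, posL_append, hpos]
    rw [hkey]
    refine hw.1 (m + j) ?_
    rw [List.length_drop] at hj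
    omega
  · rw [← hpos, ← posL_append, List.take_append_drop]
    exact hw.2

lemma adm_append_inj {a b c : ℤ} {u₁ t₁ u₂ t₂ : List ℕ}
    (hu₁ : Adm a b u₁) (ht₁ : Adm b c t₁) (hu₂ : Adm a b u₂) (ht₂ : Adm b c t₂)
    (h : u₁ ++ t₁ = u₂ ++ t₂) : u₁ = u₂ ∧ t₁ = t₂ := by
  have hlen : u₁.length = u₂.length := by
    by_contra hne
    rcases Nat.lt_or_ge u₁.length u₂.length with hlt | hge
    · have h1 : posL a ((u₁ ++ t₁).take u₁.length) = b := by
        rw [List.take_left]; exact hu₁.2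
      have h2 := (hu₂.1 u₁.length hlt).2
      rw [h, List.take_append_of_le_length (le_of_lt hlt)] at h1
      omega
    · have hlt : u₂.length < u₁.length := by omega
      have h1 : posL a ((u₂ ++ t₂).take u₂.length) = b := by
        rw [List.take_left]; exact hu₂.2
      have h2 := (hu₁.1 u₂.length hlt).2
      rw [← h, List.take_append_of_le_length (le_of_lt hlt)] at h1
      omega
  exact List.append_inj h hlen

lemma A_mul (vh : ℝ≥0∞) (ph : ℕ → ℝ≥0∞) {a b c : ℤ} (hab : a ≤ b) (hbc : b ≤ c) :
    A vh ph a c = A vh ph a b * A vh ph b c := by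
  have hbij : Function.Bijective
      (fun q : {u : List ℕ // Adm a b u} × {t : List ℕ // Adm b c t} =>
        (⟨q.1.1 ++ q.2.1, adm_append hbc q.1.2 q.2.2⟩ : {w : List ℕ // Adm a c w})) := by
    constructor
    · rintro ⟨⟨u₁, hu₁⟩, ⟨t₁, ht₁⟩⟩ ⟨⟨u₂, hu₂⟩, ⟨t₂, ht₂⟩⟩ hq
      simp only [Subtype.mk.injEq] at hq
      obtain ⟨h1, h2⟩ := adm_append_inj hu₁ ht₁ hu₂ ht₂ hq
      simp [h1, h2]
    · rintro ⟨w, hw⟩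
      obtain ⟨u, t, hu, ht, huw⟩ := adm_split hab hbc hw
      exact ⟨⟨⟨u, hu⟩, ⟨t, ht⟩⟩, by simp [huw]⟩
  rw [A, ← (Equiv.ofBijective _ hbij).tsum_eq]
  simp only [Equiv.ofBijective_apply, wt_append]
  rw [ENNReal.tsum_prod']
  simp only [ENNReal.tsum_mul_left, ENNReal.tsum_mul_right]
  rfl

lemma posL_replicate_zero_take (s : ℤ) (n m : ℕ) :
    posL s ((List.replicate n 0).take m) = s + min m n := by
  rw [List.take_replicate]
  simp [posL]

lemma adm_replicate {s y : ℤ} (h0 : 0 ≤ s) (hsy : s ≤ y) :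
    Adm s y (List.replicate (y - s).toNat 0) := by
  have hn : ((y - s).toNat : ℤ) = y - s := Int.toNat_of_nonneg (by omega)
  constructor
  · intro m hm
    rw [List.length_replicate] at hm
    rw [posL_replicate_zero_take, min_eq_left (le_of_lt hm)]
    constructor
    · omega
    · have : (m : ℤ) < (y - s).toNat := by exact_mod_cast hm
      omega
  · simp [posL]; omega

lemma le_A {vh : ℝ≥0∞} {ph : ℕ → ℝ≥0∞} {s y : ℤ} {w : List ℕ} (hw : Adm s y w) :
    wt vh ph w ≤ A vh ph s y :=
  ENNReal.le_tsum (⟨w, hw⟩ : {w : List ℕ // Adm s y w})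

lemma A_pos {vh : ℝ≥0∞} {ph : ℕ → ℝ≥0∞} (hv : 0 < vh) (hp : 0 < ph 0)
    {s y : ℤ} (h0 : 0 ≤ s) (hsy : s ≤ y) : 0 < A vh ph s y := by
  refine lt_of_lt_of_le ?_ (le_A (adm_replicate h0 hsy))
  rw [wt]
  refine ENNReal.mul_pos ?_ ?_
  · exact (pow_ne_zero _ hv.ne')
  · simp only [List.map_replicate, List.prod_replicate]
    exact (pow_ne_zero _ hp.ne')

section sup
variable {α : Type*} [LinearOrder α]

/-- `sup` of `f` over `{0, ..., n}`. -/
def supP (f : ℕ → α) (n : ℕ) : α := (Finset.range (n+1)).sup' Finset.nonempty_range_add_one f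

lemma supP_succ (f : ℕ → α) (n : ℕ) : supP f (n+1) = max (supP f n) (f (n+1)) := by
  rw [supP, supP]
  apply le_antisymm
  · apply Finset.sup'_le
    intro i hi
    rw [Finset.mem_range] at hi
    rcases Nat.lt_succ_iff_lt_or_eq.mp hi with h | h
    · exact le_trans (Finset.le_sup' f (Finset.mem_range.mpr h)) (le_max_left _ _)
    · rw [h]; exact le_max_right _ _
  · apply max_le
    · exact Finset.sup'_le _ _ fun i hi =>
        Finset.le_sup' f (Finset.mem_range.mpr (lt_trans (Finset.mem_range.mp hi) (Nat.lt_succ_self _)))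
    · exact Finset.le_sup' f (Finset.mem_range.mpr (Nat.lt_succ_self _))

lemma supP_congr {f g : ℕ → α} {n : ℕ} (h : ∀ m ≤ n, f m = g m) : supP f n = supP g n := by
  rw [supP, supP]
  exact Finset.sup'_congr _ rfl fun m hm => h m (by have := Finset.mem_range.mp hm; omega)

lemma le_supP {f : ℕ → α} {n m : ℕ} (h : m ≤ n) : f m ≤ supP f n :=
  Finset.le_sup' f (Finset.mem_range.mpr (by omega))

lemma supP_le {f : ℕ → α} {n : ℕ} {a : α} (h : ∀ m ≤ n, f m ≤ a) : supP f n ≤ a :=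
  Finset.sup'_le _ _ fun m hm => h m (by have := Finset.mem_range.mp hm; omega)

end sup

section refl
variable (s β : ℤ)

/-- Cumulative dividends along a word, barrier `β`. -/
def RdL (w : List ℕ) : ℤ :=
  max 0 (supP (fun m => posL s (w.take m) - β) w.length)

lemma RdL_nonneg (w : List ℕ) : 0 ≤ RdL s β w := le_max_left _ _

@[simp] lemma RdL_nil : RdL s β [] = max 0 (s - β) := by
  rw [RdL]
  have : supP (fun m => posL s (([] : List ℕ).take m) - β) 0 = s - β := by
    rw [supP]; simp
  rw [show (([] : List ℕ).length) = 0 from rfl] at *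
  rw [this]

lemma RdL_ge_pos (w : List ℕ) : posL s w - β ≤ RdL s β w := by
  refine le_trans ?_ (le_max_right _ _)
  have := le_supP (f := fun m => posL s (w.take m) - β) (le_refl w.length)
  simp only [List.take_of_length_le le_rfl] at this
  exact this

lemma RdL_take_succ {w : List ℕ} {k : ℕ} (hk : k < w.length) :
    RdL s β (w.take (k+1)) = max (RdL s β (w.take k)) (posL s (w.take (k+1)) - β) := by
  have hlen1 : (w.take (k+1)).length = k+1 := List.length_take_of_le hk
  have hlen0 : (w.take k).length = k := List.length_take_of_le (le_of_lt hk)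
  have htt : ∀ j, (w.take (k+1)).take j = w.take (min j (k+1)) := fun j => List.take_take
  have htt0 : ∀ j, (w.take k).take j = w.take (min j k) := fun j => List.take_take
  rw [RdL, RdL, hlen1, hlen0]
  have hcongr1 : supP (fun m => posL s ((w.take (k+1)).take m) - β) (k+1)
      = supP (fun m => posL s (w.take m) - β) (k+1) := by
    apply supP_congr
    intro m hm
    rw [htt m, min_eq_left (by omega)]
  have hcongr0 : supP (fun m => posL s ((w.take k).take m) - β) k
      = supP (fun m => posL s (w.take m) - β) k := by
    apply supP_congr
    intro m hm
    rw [htt0 m, min_eq_left (by omega)]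
  rw [hcongr1, hcongr0, supP_succ]
  omega

lemma RdL_take_le_succ (w : List ℕ) (k : ℕ) :
    RdL s β (w.take (k+1)) ≤ RdL s β (w.take k) + 1 := by
  rcases lt_or_ge k w.length with hk | hk
  · rw [RdL_take_succ s β hk]
    have h1 := posL_take_succ_le s w k
    have h2 := RdL_ge_pos s β (w.take k)
    omega
  · rw [List.take_of_length_le hk, List.take_of_length_le (by omega)]
    omega

lemma RdL_take_mono (w : List ℕ) : Monotone fun m => RdL s β (w.take m) := by
  apply monotone_nat_of_le_succ
  intro k
  rcases lt_or_ge k w.length with hk | hk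
  · rw [RdL_take_succ s β hk]; exact le_max_left _ _
  · rw [List.take_of_length_le hk, List.take_of_length_le (by omega)]

lemma RdL_eq_zero (w : List ℕ) (hs : s ≤ β)
    (h : ∀ m ≤ w.length, posL s (w.take m) ≤ β) : RdL s β w = 0 := by
  have : supP (fun m => posL s (w.take m) - β) w.length ≤ 0 := by
    apply supP_le
    intro m hm
    have := h m hm
    omega
  rw [RdL]; omega

lemma pos_le_of_RdL_eq_zero {w : List ℕ} (h : RdL s β w = 0) : posL s w ≤ β := by
  have := RdL_ge_pos s β w; omega

/-- Survival of the reflected path along the whole word. -/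
def Surv (w : List ℕ) : Prop := ∀ m ≤ w.length, 0 ≤ posL s (w.take m) - RdL s β (w.take m)

/-- The reflected path survives, and the `(k+1)`-st dividend is paid exactly at the final step. -/
def DivEnd (k : ℕ) (w : List ℕ) : Prop :=
  Surv s β w ∧ RdL s β w = k + 1 ∧ ∀ m < w.length, RdL s β (w.take m) ≤ k

variable {s β}

lemma RdL_adm_prefix (hs : s ≤ β) {u : List ℕ} (hu : Adm s (β+1) u) {m : ℕ}
    (hm : m < u.length) : RdL s β (u.take m) = 0 := by
  apply RdL_eq_zero s β _ hs
  intro j hj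
  rw [List.length_take_of_le (le_of_lt hm)] at hj
  rw [List.take_take, min_eq_left hj]
  have := (hu.1 j (by omega)).2
  omega

lemma RdL_adm (hs : s ≤ β) {u : List ℕ} (hu : Adm s (β+1) u) : RdL s β u = 1 := by
  have h2 := RdL_ge_pos s β u
  rw [hu.2] at h2
  have h1 : supP (fun m => posL s (u.take m) - β) u.length ≤ 1 := by
    apply supP_le
    intro m hm
    rcases eq_or_lt_of_le hm with h | h
    · rw [h, List.take_of_length_le le_rfl, hu.2]; omega
    · have := (hu.1 m h).2; omega
  rw [RdL] at *
  omega

lemma posL_add_one (a : ℤ) (w : List ℕ) : posL (a+1) w = posL a w + 1 := by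
  simp [posL]; ring

lemma append_posL {u : List ℕ} (hu : Adm s (β+1) u) (t : List ℕ) (j : ℕ) :
    posL s ((u++t).take (u.length + j)) = posL β (t.take j) + 1 := by
  rw [List.take_length_add_append, posL_append, hu.2, posL_add_one]

lemma append_RdL (hs : s ≤ β) {u : List ℕ} (hu : Adm s (β+1) u) (t : List ℕ) :
    ∀ {j : ℕ}, j ≤ t.length →
      RdL s β ((u++t).take (u.length + j)) = RdL β β (t.take j) + 1 := by
  intro j
  induction j with
  | zero =>
    intro _
    rw [Nat.add_zero, List.take_left, RdL_adm hs hu]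
    simp
  | succ j ih =>
    intro hj
    have hj' : j ≤ t.length := by omega
    have hlt : u.length + j < (u ++ t).length := by
      rw [List.length_append]; omega
    have h1 : RdL s β ((u++t).take (u.length + (j+1)))
        = max (RdL s β ((u++t).take (u.length + j)))
          (posL s ((u++t).take (u.length + (j+1))) - β) := by
      rw [show u.length + (j+1) = (u.length + j) + 1 by omega]
      exact RdL_take_succ s β hlt
    have h2 := RdL_take_succ β β (show j < t.length by omega)
    rw [h1, ih hj', append_posL hu t (j+1), h2]
    omega

lemma surv_append (hs : s ≤ β) {u t : List ℕ} (hu : Adm s (β+1) u) (ht : Surv β β t) :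
    Surv s β (u ++ t) := by
  intro m hm
  rw [List.length_append] at hm
  rcases lt_or_ge m u.length with h | h
  · rw [List.take_append_of_le_length (le_of_lt h), RdL_adm_prefix hs hu h]
    have := (hu.1 m h).1
    omega
  · obtain ⟨j, rfl⟩ : ∃ j, m = u.length + j := ⟨m - u.length, by omega⟩
    rw [append_posL hu t j, append_RdL hs hu t (by omega)]
    have := ht j (by omega)
    omega

lemma divEnd_append (hs : s ≤ β) {u t : List ℕ} {k : ℕ}
    (hu : Adm s (β+1) u) (ht : DivEnd β β k t) : DivEnd s β (k+1) (u ++ t) := by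
  refine ⟨surv_append hs hu ht.1, ?_, ?_⟩
  · have : RdL s β ((u++t).take (u.length + t.length)) = RdL β β (t.take t.length) + 1 :=
      append_RdL hs hu t le_rfl
    rw [List.take_of_length_le (by rw [List.length_append]),
      List.take_of_length_le le_rfl] at this
    rw [this, ht.2.1]
    push_cast
    ring
  · intro m hm
    rw [List.length_append] at hm
    rcases lt_or_ge m u.length with h | h
    · rw [List.take_append_of_le_length (le_of_lt h), RdL_adm_prefix hs hu h]
      omega
    · obtain ⟨j, rfl⟩ : ∃ j, m = u.length + j := ⟨m - u.length, by omega⟩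
      rw [append_RdL hs hu t (by omega)]
      have := ht.2.2 j (by omega)
      omega

lemma divEnd_zero (hs : s ≤ β) (hβ : 0 ≤ β) {w : List ℕ} :
    DivEnd s β 0 w ↔ Adm s (β+1) w := by
  constructor
  · rintro ⟨h1, h2, h3⟩
    have hz : ∀ m < w.length, RdL s β (w.take m) = 0 := by
      intro m hm
      have := h3 m hm
      have := RdL_nonneg s β (w.take m)
      omega
    constructor
    · intro m hm
      have hp := h1 m (le_of_lt hm)
      rw [hz m hm] at hp
      have := pos_le_of_RdL_eq_zero s β (hz m hm)
      omega
    · have hne : w ≠ [] := by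
        intro h
        rw [h] at h2
        simp at h2
        omega
      obtain ⟨l, hl⟩ : ∃ l, w.length = l + 1 :=
        ⟨w.length - 1, by cases w with | nil => exact absurd rfl hne | cons a t => simp⟩
      have hkey := RdL_take_succ s β (show l < w.length by omega)
      rw [List.take_of_length_le (by omega), hz l (by omega)] at hkey
      rw [hkey] at h2
      omega
  · intro hw
    refine ⟨?_, RdL_adm hs hw, fun m hm => le_of_eq (RdL_adm_prefix hs hw hm)⟩
    intro m hm
    rcases eq_or_lt_of_le hm with h | h
    · rw [h, List.take_of_length_le le_rfl, RdL_adm hs hw, hw.2]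
      omega
    · rw [RdL_adm_prefix hs hw h]
      have := (hw.1 m h).1
      omega

lemma divEnd_split (hs : s ≤ β) {w : List ℕ} {k : ℕ} (hw : DivEnd s β (k+1) w) :
    ∃ u t, Adm s (β+1) u ∧ DivEnd β β k t ∧ u ++ t = w := by
  classical
  have hPex : ∃ m, 1 ≤ RdL s β (w.take m) :=
    ⟨w.length, by rw [List.take_of_length_le le_rfl, hw.2.1]; omega⟩
  obtain ⟨m, hm, hmin⟩ : ∃ m, 1 ≤ RdL s β (w.take m) ∧ ∀ m' < m, RdL s β (w.take m') = 0 := by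
    refine ⟨Nat.find hPex, Nat.find_spec hPex, fun m' hm' => ?_⟩
    have := Nat.find_min hPex hm'
    have := RdL_nonneg s β (w.take m')
    omega
  have hmlen : m ≤ w.length := by
    by_contra h
    push_neg at h
    have h0 := hmin w.length h
    rw [List.take_of_length_le le_rfl, hw.2.1] at h0
    omega
  have hm1 : 1 ≤ m := by
    rcases Nat.eq_zero_or_pos m with h | h
    · rw [h] at hm
      simp at hm
      omega
    · omega
  have hRm : RdL s β (w.take m) = 1 := by
    obtain ⟨l, rfl⟩ : ∃ l, m = l + 1 := ⟨m - 1, by omega⟩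
    have := RdL_take_le_succ s β w l
    rw [hmin l (by omega)] at this
    omega
  have hposm : posL s (w.take m) = β + 1 := by
    obtain ⟨l, hl⟩ : ∃ l, m = l + 1 := ⟨m - 1, by omega⟩
    have hkey := RdL_take_succ s β (show l < w.length by omega)
    rw [← hl, hmin l (by omega), hRm] at hkey
    omega
  have hadm : Adm s (β+1) (w.take m) := by
    constructor
    · intro m' hm'
      rw [List.length_take_of_le hmlen] at hm'
      rw [List.take_take, min_eq_left (le_of_lt hm')]
      have h0 := hw.1 m' (by omega)
      rw [hmin m' hm'] at h0
      have := pos_le_of_RdL_eq_zero s β (hmin m' hm')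
      omega
    · exact hposm
  refine ⟨w.take m, w.drop m, hadm, ⟨?_, ?_, ?_⟩, List.take_append_drop m w⟩
  · intro j hj
    rw [List.length_drop] at hj
    have h1 := append_posL hadm (w.drop m) j
    have h2 := append_RdL hs hadm (w.drop m) (show j ≤ (w.drop m).length by rw [List.length_drop]; omega)
    rw [List.take_append_drop] at h1 h2
    rw [List.length_take_of_le hmlen] at h1 h2
    have h3 := hw.1 (m + j) (by omega)
    omega
  · have h2 := append_RdL hs hadm (w.drop m) (le_refl (w.drop m).length)
    rw [List.take_append_drop, List.take_of_length_le le_rfl] at h2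
    rw [List.length_take_of_le hmlen, List.length_drop] at h2
    rw [List.take_of_length_le (by omega), hw.2.1] at h2
    omega
  · intro j hj
    rw [List.length_drop] at hj
    have h2 := append_RdL hs hadm (w.drop m) (show j ≤ (w.drop m).length by rw [List.length_drop]; omega)
    rw [List.take_append_drop] at h2
    rw [List.length_take_of_le hmlen] at h2
    have h3 := hw.2.2 (m + j) (by omega)
    omega

lemma divEnd_append_inj (hs : s ≤ β) {u₁ t₁ u₂ t₂ : List ℕ}
    (hu₁ : Adm s (β+1) u₁) (hu₂ : Adm s (β+1) u₂)
    (h : u₁ ++ t₁ = u₂ ++ t₂) : u₁ = u₂ ∧ t₁ = t₂ := by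
  have hlen : u₁.length = u₂.length := by
    by_contra hne
    have key : ∀ (a₁ b₁ a₂ b₂ : List ℕ), Adm s (β+1) a₁ → Adm s (β+1) a₂ →
        a₁ ++ b₁ = a₂ ++ b₂ → a₁.length < a₂.length → False := by
      intro a₁ b₁ a₂ b₂ ha₁ ha₂ hab hlt
      have h1 : RdL s β ((a₁ ++ b₁).take a₁.length) = 1 := by
        rw [List.take_left]; exact RdL_adm hs ha₁
      have h2 : RdL s β ((a₂ ++ b₂).take a₁.length) = 0 := by
        rw [List.take_append_of_le_length (le_of_lt hlt)]
        exact RdL_adm_prefix hs ha₂ hlt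
      rw [hab, h2] at h1
      omega
    rcases Nat.lt_or_ge u₁.length u₂.length with hlt | hge
    · exact key u₁ t₁ u₂ t₂ hu₁ hu₂ h hlt
    · exact key u₂ t₂ u₁ t₁ hu₂ hu₁ h.symm (by omega)
  exact List.append_inj h hlen

lemma divEnd_unique {k k' : ℕ} {w : List ℕ} (h : DivEnd s β k w) (h' : DivEnd s β k' w) :
    k = k' := by
  have := h.2.1
  have := h'.2.1
  omega

lemma divEnd_iff (hs : s ≤ β) {w : List ℕ} :
    (Surv s β w ∧ w ≠ [] ∧ RdL s β w = RdL s β (w.take (w.length - 1)) + 1)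
      ↔ ∃ k, DivEnd s β k w := by
  constructor
  · rintro ⟨h1, h2, h3⟩
    refine ⟨(RdL s β (w.take (w.length - 1))).toNat, h1, ?_, ?_⟩
    · rw [Int.toNat_of_nonneg (RdL_nonneg _ _ _)]
      exact h3
    · intro m hm
      have hmono := RdL_take_mono s β w (show m ≤ w.length - 1 by omega)
      rw [Int.toNat_of_nonneg (RdL_nonneg _ _ _)]
      exact hmono
  · rintro ⟨k, h1, h2, h3⟩
    have hne : w ≠ [] := by
      intro h
      rw [h] at h2
      simp at h2
      omega
    obtain ⟨l, hl⟩ : ∃ l, w.length = l + 1 :=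
      ⟨w.length - 1, by cases w with | nil => exact absurd rfl hne | cons a t => simp⟩
    refine ⟨h1, hne, ?_⟩
    have hle := h3 (w.length - 1) (by omega)
    have hsucc := RdL_take_le_succ s β w l
    rw [List.take_of_length_le (by omega)] at hsucc
    rw [show w.length - 1 = l by omega] at *
    omega

section Tsums
variable (vh : ℝ≥0∞) (ph : ℕ → ℝ≥0∞)

/-- Total weight of words whose `(k+1)`-st dividend occurs at the final step. -/
noncomputable def Tk (s β : ℤ) (k : ℕ) : ℝ≥0∞ :=
  ∑' w : {w : List ℕ // DivEnd s β k w}, wt vh ph (w : List ℕ)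

lemma Tk_zero (hs : s ≤ β) (hβ : 0 ≤ β) : Tk vh ph s β 0 = A vh ph s (β+1) := by
  rw [Tk, A, ← (Equiv.subtypeEquivRight (fun w => divEnd_zero hs hβ)).tsum_eq
    (fun w : {w : List ℕ // Adm s (β+1) w} => wt vh ph (w : List ℕ))]
  rfl

lemma Tk_succ (hs : s ≤ β) (k : ℕ) :
    Tk vh ph s β (k+1) = A vh ph s (β+1) * Tk vh ph β β k := by
  have hbij : Function.Bijective
      (fun q : {u : List ℕ // Adm s (β+1) u} × {t : List ℕ // DivEnd β β k t} =>
        (⟨q.1.1 ++ q.2.1, divEnd_append hs q.1.2 q.2.2⟩ : {w : List ℕ // DivEnd s β (k+1) w})) := by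
    constructor
    · rintro ⟨⟨u₁, hu₁⟩, ⟨t₁, ht₁⟩⟩ ⟨⟨u₂, hu₂⟩, ⟨t₂, ht₂⟩⟩ hq
      simp only [Subtype.mk.injEq] at hq
      obtain ⟨e1, e2⟩ := divEnd_append_inj hs hu₁ hu₂ hq
      simp [e1, e2]
    · rintro ⟨w, hw⟩
      obtain ⟨u, t, hu, ht, huw⟩ := divEnd_split hs hw
      exact ⟨⟨⟨u, hu⟩, ⟨t, ht⟩⟩, by simp [huw]⟩
  rw [Tk, ← (Equiv.ofBijective _ hbij).tsum_eq]
  simp only [Equiv.ofBijective_apply, wt_append]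
  rw [ENNReal.tsum_prod']
  simp only [ENNReal.tsum_mul_left, ENNReal.tsum_mul_right]
  rfl

lemma Tk_base (hβ : 0 ≤ β) (k : ℕ) :
    Tk vh ph β β k = (A vh ph β (β+1))^(k+1) := by
  induction k with
  | zero => rw [Tk_zero vh ph le_rfl hβ, pow_one]
  | succ k ih => rw [Tk_succ vh ph le_rfl k, ih, ← pow_succ']

lemma Tk_formula (hs : s ≤ β) (hβ : 0 ≤ β) (k : ℕ) :
    Tk vh ph s β k = A vh ph s (β+1) * (A vh ph β (β+1))^k := by
  cases k with
  | zero => rw [Tk_zero vh ph hs hβ, pow_zero, mul_one]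
  | succ k => rw [Tk_succ vh ph hs k, Tk_base vh ph hβ k]

end Tsums

end refl

end RWAux

noncomputable section

namespace RW

variable {Ω : Type*} [MeasurableSpace Ω]

section Bridge

variable {Ω : Type*} [MeasurableSpace Ω]

/-- The list of the first `n` claims. -/
def claimList (C : ℕ → Ω → ℕ) (n : ℕ) (ω : Ω) : List ℕ := List.ofFn fun j : Fin n => C j ω

@[simp] lemma claimList_length (C : ℕ → Ω → ℕ) (n : ℕ) (ω : Ω) :
    (claimList C n ω).length = n := List.length_ofFn

lemma claimList_take (C : ℕ → Ω → ℕ) {m n : ℕ} (h : m ≤ n) (ω : Ω) :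
    (claimList C n ω).take m = claimList C m ω := by
  apply List.ext_getElem
  · simp [claimList]; omega
  · intro j h1 h2
    simp [claimList]

lemma walk_eq_posL (C : ℕ → Ω → ℕ) (s : ℤ) (n : ℕ) (ω : Ω) :
    walk C s n ω = RWAux.posL s (claimList C n ω) := by
  rw [walk, RWAux.posL, claimList]
  congr 1
  · simp
  · rw [List.sum_ofFn]
    push_cast
    rw [Finset.sum_range fun i => (C i ω : ℤ)]

lemma walk_take_eq (C : ℕ → Ω → ℕ) (s : ℤ) {m n : ℕ} (h : m ≤ n) (ω : Ω) :
    walk C s m ω = RWAux.posL s ((claimList C n ω).take m) := by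
  rw [claimList_take C h, walk_eq_posL]

lemma Rdiv_eq_RdL (C : ℕ → Ω → ℕ) (x β : ℤ) (n : ℕ) (ω : Ω) :
    Rdiv C x β n ω = RWAux.RdL x β (claimList C n ω) := by
  have h1 : Rdiv C x β n ω = max 0 (RWAux.supP (fun m => walk C x m ω - β) n) := rfl
  rw [h1, RWAux.RdL, claimList_length]
  congr 1
  apply RWAux.supP_congr
  intro m hm
  rw [walk_take_eq C x hm ω]

section tau

lemma sInf_image_eq {S : Set ℕ} (h : S.Nonempty) :
    sInf ((fun n : ℕ => (n : ℕ∞)) '' S) = (sInf S : ℕ) := by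
  apply le_antisymm
  · exact sInf_le ⟨sInf S, Nat.sInf_mem h, rfl⟩
  · apply le_sInf
    rintro a ⟨m, hm, rfl⟩
    show ((sInf S : ℕ) : ℕ∞) ≤ (m : ℕ∞)
    exact_mod_cast Nat.sInf_le hm

lemma cast_lt_sInf_iff {S : Set ℕ} {n : ℕ} :
    (n : ℕ∞) < sInf ((fun n : ℕ => (n : ℕ∞)) '' S) ↔ ∀ m ∈ S, n < m := by
  rcases Set.eq_empty_or_nonempty S with h | h
  · subst h
    simp [sInf_empty, lt_top_iff_ne_top]
  · rw [sInf_image_eq h, Nat.cast_lt]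
    constructor
    · intro hn m hm
      exact lt_of_lt_of_le hn (Nat.sInf_le hm)
    · intro hn
      exact hn _ (Nat.sInf_mem h)

lemma sInf_eq_cast_iff {S : Set ℕ} {n : ℕ} :
    sInf ((fun n : ℕ => (n : ℕ∞)) '' S) = (n : ℕ∞) ↔ n ∈ S ∧ ∀ m ∈ S, n ≤ m := by
  rcases Set.eq_empty_or_nonempty S with h | h
  · subst h
    simp [sInf_empty]
  · rw [sInf_image_eq h, Nat.cast_inj]
    constructor
    · rintro rfl
      exact ⟨Nat.sInf_mem h, fun m hm => Nat.sInf_le hm⟩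
    · rintro ⟨h1, h2⟩
      exact le_antisymm (Nat.sInf_le h1) (h2 _ (Nat.sInf_mem h))

end tau

end Bridge


section Cyl

variable {Ω : Type*} [MeasurableSpace Ω] (P : Measure Ω) [IsProbabilityMeasure P]
  (C : ℕ → Ω → ℕ)

/-- Cylinder event: the first `|w|` claims spell out the word `w`. -/
def cyl (w : List ℕ) : Set Ω := {ω | claimList C w.length ω = w}

lemma mem_cyl_iff {w : List ℕ} {ω : Ω} :
    ω ∈ cyl C w ↔ ∀ j, ∀ h : j < w.length, C j ω = w[j] := by
  constructor
  · intro hω j hj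
    have h2 := List.getElem_of_eq hω (i := j) (by simpa using hj)
    rw [← h2]
    simp [claimList]
  · intro h
    apply List.ext_getElem (by simp)
    intro j h1 h2
    simp only [claimList, List.getElem_ofFn]
    exact h j h2

lemma cyl_eq_iInter (w : List ℕ) :
    cyl C w = ⋂ j ∈ Finset.range w.length, (C j)⁻¹' {w.getD j 0} := by
  ext ω
  rw [mem_cyl_iff]
  simp only [Set.mem_iInter, Finset.mem_range, Set.mem_preimage, Set.mem_singleton_iff]
  constructor
  · intro h j hj
    rw [h j hj, List.getD_eq_getElem w 0 hj]
  · intro h j hj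
    rw [h j hj, List.getD_eq_getElem w 0 hj]

lemma measurable_cyl (hC : ∀ i, Measurable (C i)) (w : List ℕ) :
    MeasurableSet (cyl C w) := by
  rw [cyl_eq_iInter]
  exact MeasurableSet.biInter (Set.to_countable _)
    fun j _ => (hC j) (measurableSet_singleton _)

variable {p : ℝ → ℝ}

lemma P_cyl {p : ℕ → ℝ}
    (hindep : ProbabilityTheory.iIndepFun C P)
    (hdist : ∀ i k, P {ω | C i ω = k} = ENNReal.ofReal (p k)) (w : List ℕ) :
    P (cyl C w) = (w.map fun k => ENNReal.ofReal (p k)).prod := by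
  rw [cyl_eq_iInter]
  rw [hindep.meas_biInter (fun j _ => ⟨{w.getD j 0}, trivial, rfl⟩)]
  have h1 : ∀ j, P ((C j)⁻¹' {w.getD j 0}) = ENNReal.ofReal (p (w.getD j 0)) := by
    intro j
    rw [← hdist j (w.getD j 0)]
    rfl
  simp only [h1]
  clear h1
  induction w with
  | nil => simp
  | cons c t ih =>
    rw [List.map_cons, List.prod_cons, ← ih]
    rw [show (c :: t).length = t.length + 1 from rfl, Finset.prod_range_succ']
    simp only [List.getD_cons_succ, List.getD_cons_zero]
    exact mul_comm _ _

/-- The probability of an event described by a property of the first `i` claims. -/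
lemma meas_event {p : ℕ → ℝ} (hC : ∀ i, Measurable (C i))
    (hindep : ProbabilityTheory.iIndepFun C P)
    (hdist : ∀ i k, P {ω | C i ω = k} = ENNReal.ofReal (p k)) (i : ℕ) (Q : List ℕ → Prop) :
    P {ω | Q (claimList C i ω)}
      = ∑' w : {w : List ℕ // Q w ∧ w.length = i},
          ((w : List ℕ).map fun k => ENNReal.ofReal (p k)).prod := by
  have hset : {ω | Q (claimList C i ω)}
      = ⋃ w : {w : List ℕ // Q w ∧ w.length = i}, cyl C (w : List ℕ) := by
    ext ω
    simp only [Set.mem_setOf_eq, Set.mem_iUnion]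
    constructor
    · intro h
      exact ⟨⟨claimList C i ω, h, by simp⟩, by simp [cyl]⟩
    · rintro ⟨⟨w, hw, hlen⟩, hωw⟩
      have : claimList C i ω = w := by
        rw [← hlen]; exact hωw
      rwa [this]
  rw [hset, measure_iUnion ?_ fun w => measurable_cyl C hC _]
  · exact tsum_congr fun w => P_cyl P C hindep hdist _
  · rintro ⟨w₁, hw₁, hl₁⟩ ⟨w₂, hw₂, hl₂⟩ hne
    simp only [Set.disjoint_left]
    intro ω h1 h2
    apply hne
    simp only [cyl, Set.mem_setOf_eq] at h1 h2
    apply Subtype.ext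
    simp only
    rw [← h1, ← h2, hl₁, hl₂]

end Cyl


section Events

variable {Ω : Type*} [MeasurableSpace Ω] (C : ℕ → Ω → ℕ)

@[simp] lemma walk_zero (s : ℤ) (ω : Ω) : walk C s 0 ω = s := by simp [walk]

lemma walk_succ (s : ℤ) (n : ℕ) (ω : Ω) :
    walk C s (n+1) ω = walk C s n ω + 1 - C n ω := by
  rw [walk, walk, Finset.sum_range_succ]
  push_cast
  ring

lemma tauPlus_eq_iff {s y : ℤ} {ω : Ω} {i : ℕ} :
    tauPlus C s y ω = (i : ℕ∞) ↔ (y ≤ walk C s i ω ∧ ∀ m < i, walk C s m ω < y) := by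
  rw [tauPlus, sInf_eq_cast_iff]
  simp only [Set.mem_setOf_eq]
  constructor
  · rintro ⟨h1, h2⟩
    refine ⟨h1, fun m hm => ?_⟩
    by_contra h
    push_neg at h
    have := h2 m h
    omega
  · rintro ⟨h1, h2⟩
    refine ⟨h1, fun m hm => ?_⟩
    by_contra h
    push_neg at h
    have := h2 m h
    omega

lemma cast_lt_tauMinus_iff {s c : ℤ} {ω : Ω} {i : ℕ} :
    (i : ℕ∞) < tauMinus C s c ω ↔ ∀ m ≤ i, c < walk C s m ω := by
  rw [tauMinus, cast_lt_sInf_iff]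
  simp only [Set.mem_setOf_eq]
  constructor
  · intro h m hm
    by_contra hc
    push_neg at hc
    have := h m hc
    omega
  · intro h m hm
    by_contra hc
    push_neg at hc
    have := h m hc
    omega

lemma cast_lt_Truin_iff {x β : ℤ} {ω : Ω} {i : ℕ} :
    (i : ℕ∞) < Truin C x β ω ↔ ∀ m ≤ i, -1 < walk C x m ω - Rdiv C x β m ω := by
  rw [Truin, cast_lt_sInf_iff]
  simp only [Set.mem_setOf_eq]
  constructor
  · intro h m hm
    by_contra hc
    push_neg at hc
    have := h m hc
    omega
  · intro h m hm
    by_contra hc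
    push_neg at hc
    have := h m hc
    omega

/-- First passage to `y` (before passage below `0`) at time exactly `i`. -/
def Fev (s y : ℤ) (i : ℕ) : Set Ω :=
  {ω | tauPlus C s y ω = (i : ℕ∞) ∧ (i : ℕ∞) < tauMinus C s (-1) ω}

lemma mem_Fev_iff {s y : ℤ} (h0 : 0 ≤ s) (hsy : s ≤ y) {i : ℕ} {ω : Ω} :
    ω ∈ Fev C s y i ↔ RWAux.Adm s y (claimList C i ω) := by
  rw [Fev, Set.mem_setOf_eq, tauPlus_eq_iff, cast_lt_tauMinus_iff]
  constructor
  · rintro ⟨⟨h1, h2⟩, h3⟩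
    constructor
    · intro m hm
      rw [claimList_length] at hm
      rw [← walk_take_eq C s (le_of_lt hm)]
      have := h3 m (le_of_lt hm)
      exact ⟨by omega, h2 m hm⟩
    · have hwi : RWAux.posL s (claimList C i ω) = walk C s i ω := (walk_eq_posL C s i ω).symm
      rw [hwi]
      have hle : walk C s i ω ≤ y := by
        cases i with
        | zero => simpa using hsy
        | succ l =>
          have hw := walk_succ C s l ω
          have := h2 l (Nat.lt_succ_self l)
          have : (0:ℤ) ≤ C l ω := Int.ofNat_nonneg _
          omega
      omega
  · intro hAdm
    have hlen : (claimList C i ω).length = i := by simp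
    have hfin : walk C s i ω = y := by
      rw [walk_eq_posL]
      exact hAdm.2
    refine ⟨⟨by omega, fun m hm => ?_⟩, fun m hm => ?_⟩
    · have := hAdm.1 m (by omega)
      rw [← walk_take_eq C s (le_of_lt hm)] at this
      omega
    · rcases eq_or_lt_of_le hm with h | h
      · subst h; omega
      · have := hAdm.1 m (by omega)
        rw [← walk_take_eq C s (le_of_lt h)] at this
        omega

lemma Fev_disjoint (s y : ℤ) :
    Pairwise fun i j => Disjoint (Fev C s y i) (Fev C s y j) := by
  intro i j hij
  rw [Set.disjoint_left]
  rintro ω ⟨h1, _⟩ ⟨h2, _⟩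
  apply hij
  have h3 : ((i : ℕ∞)) = (j : ℕ∞) := by rw [← h1, ← h2]
  exact_mod_cast h3

lemma measurable_claimEvent (hC : ∀ i, Measurable (C i)) (i : ℕ) (Q : List ℕ → Prop) :
    MeasurableSet {ω | Q (claimList C i ω)} := by
  have hset : {ω | Q (claimList C i ω)}
      = ⋃ w : {w : List ℕ // Q w ∧ w.length = i}, cyl C (w : List ℕ) := by
    ext ω
    simp only [Set.mem_setOf_eq, Set.mem_iUnion]
    constructor
    · intro h
      exact ⟨⟨claimList C i ω, h, by simp⟩, by simp [cyl]⟩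
    · rintro ⟨⟨w, hw, hlen⟩, hωw⟩
      have : claimList C i ω = w := by
        rw [← hlen]; exact hωw
      rwa [this]
  rw [hset]
  exact MeasurableSet.iUnion fun w => measurable_cyl C hC _

lemma measurable_Fev (hC : ∀ i, Measurable (C i)) {s y : ℤ} (h0 : 0 ≤ s) (hsy : s ≤ y)
    (i : ℕ) : MeasurableSet (Fev C s y i) := by
  have : Fev C s y i = {ω | RWAux.Adm s y (claimList C i ω)} :=
    Set.ext fun ω => mem_Fev_iff C h0 hsy
  rw [this]
  exact measurable_claimEvent C hC i _

/-- Reflected-walk survival up to `i` together with a dividend paid at time `i`. -/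
def Gev (x β : ℤ) (i : ℕ) : Set Ω :=
  {ω | (i : ℕ∞) < Truin C x β ω ∧ rdiv C x β i ω = 1}

lemma Rdiv_zero {x β : ℤ} (ω : Ω) : Rdiv C x β 0 ω = max 0 (x - β) := by
  rw [Rdiv_eq_RdL]
  have : claimList C 0 ω = [] := rfl
  rw [this, RWAux.RdL_nil]

lemma mem_Gev_iff {x β : ℤ} (hx : x ≤ β) {i : ℕ} {ω : Ω} :
    ω ∈ Gev C x β i ↔ ∃ k, RWAux.DivEnd x β k (claimList C i ω) := by
  rw [← RWAux.divEnd_iff hx]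
  rw [Gev, Set.mem_setOf_eq, cast_lt_Truin_iff]
  have hsurv : (∀ m ≤ i, -1 < walk C x m ω - Rdiv C x β m ω)
      ↔ RWAux.Surv x β (claimList C i ω) := by
    rw [RWAux.Surv]
    simp only [claimList_length]
    constructor
    · intro h m hm
      rw [claimList_take C hm, ← walk_eq_posL, ← Rdiv_eq_RdL]
      have := h m hm
      omega
    · intro h m hm
      have := h m hm
      rw [claimList_take C hm, ← walk_eq_posL, ← Rdiv_eq_RdL] at this
      omega
  rw [hsurv]
  cases i with
  | zero =>
    have h0 : rdiv C x β 0 ω = 0 := by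
      rw [rdiv, if_pos rfl, Rdiv_zero]
      omega
    have hnil : claimList C 0 ω = [] := rfl
    simp [h0, hnil]
  | succ l =>
    have hrd : rdiv C x β (l+1) ω = Rdiv C x β (l+1) ω - Rdiv C x β l ω := by
      rw [rdiv, if_neg (Nat.succ_ne_zero l)]
      norm_num
    have hlen : (claimList C (l+1) ω).length = l + 1 := by simp
    have htk : (claimList C (l+1) ω).take ((claimList C (l+1) ω).length - 1)
        = claimList C l ω := by
      rw [hlen]
      exact claimList_take C (by omega) ω
    constructor
    · rintro ⟨h1, h2⟩
      refine ⟨h1, by simp [claimList, List.ofFn_succ], ?_⟩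
      rw [htk, ← Rdiv_eq_RdL, ← Rdiv_eq_RdL]
      omega
    · rintro ⟨h1, _, h3⟩
      refine ⟨h1, ?_⟩
      rw [htk, ← Rdiv_eq_RdL, ← Rdiv_eq_RdL] at h3
      omega

lemma measurable_Gev (hC : ∀ i, Measurable (C i)) {x β : ℤ} (hx : x ≤ β) (i : ℕ) :
    MeasurableSet (Gev C x β i) := by
  have : Gev C x β i = {ω | ∃ k, RWAux.DivEnd x β k (claimList C i ω)} :=
    Set.ext fun ω => mem_Gev_iff C hx
  rw [this]
  exact measurable_claimEvent C hC i fun w => ∃ k, RWAux.DivEnd x β k w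

end Events


section Sums

variable {Ω : Type*} [MeasurableSpace Ω] (P : Measure Ω) [IsProbabilityMeasure P]
  (C : ℕ → Ω → ℕ)

lemma tsum_fiber_length (Q : List ℕ → Prop) (f : List ℕ → ℝ≥0∞) :
    ∑' (i : ℕ) (w : {w : List ℕ // Q w ∧ w.length = i}), f w.1
      = ∑' w : {w : List ℕ // Q w}, f w.1 := by
  rw [← ENNReal.tsum_sigma' fun p : (Σ i : ℕ, {w : List ℕ // Q w ∧ w.length = i}) => f p.2.1]
  have hbij : Function.Bijective
      (fun p : (Σ i : ℕ, {w : List ℕ // Q w ∧ w.length = i}) =>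
        (⟨p.2.1, p.2.2.1⟩ : {w : List ℕ // Q w})) := by
    constructor
    · rintro ⟨i, w, hw, rfl⟩ ⟨j, u, hu, rfl⟩ h
      simp only [Subtype.mk.injEq] at h
      subst h
      rfl
    · rintro ⟨w, hw⟩
      exact ⟨⟨w.length, ⟨w, hw, rfl⟩⟩, rfl⟩
  rw [← (Equiv.ofBijective _ hbij).tsum_eq (fun w : {w : List ℕ // Q w} => f w.1)]
  rfl

lemma tsum_divEnd_split (x β : ℤ) (f : List ℕ → ℝ≥0∞) :
    ∑' w : {w : List ℕ // ∃ k, RWAux.DivEnd x β k w}, f w.1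
      = ∑' (k : ℕ) (w : {w : List ℕ // RWAux.DivEnd x β k w}), f w.1 := by
  rw [← ENNReal.tsum_sigma' fun p : (Σ k : ℕ, {w : List ℕ // RWAux.DivEnd x β k w}) => f p.2.1]
  have hbij : Function.Bijective
      (fun p : (Σ k : ℕ, {w : List ℕ // RWAux.DivEnd x β k w}) =>
        (⟨p.2.1, ⟨p.1, p.2.2⟩⟩ : {w : List ℕ // ∃ k, RWAux.DivEnd x β k w})) := by
    constructor
    · rintro ⟨k, w, hw⟩ ⟨k', u, hu⟩ h
      simp only [Subtype.mk.injEq] at h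
      subst h
      have : k = k' := RWAux.divEnd_unique hw hu
      subst this
      rfl
    · rintro ⟨w, hw⟩
      obtain ⟨k, hk⟩ := hw
      exact ⟨⟨k, ⟨w, hk⟩⟩, rfl⟩
  rw [← (Equiv.ofBijective _ hbij).tsum_eq
    (fun w : {w : List ℕ // ∃ k, RWAux.DivEnd x β k w} => f w.1)]
  rfl

variable {p : ℕ → ℝ} {v : ℝ}

lemma A_prob (hC : ∀ i, Measurable (C i))
    (hindep : ProbabilityTheory.iIndepFun C P)
    (hdist : ∀ i k, P {ω | C i ω = k} = ENNReal.ofReal (p k))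
    {s y : ℤ} (h0 : 0 ≤ s) (hsy : s ≤ y) :
    RWAux.A (ENNReal.ofReal v) (fun k => ENNReal.ofReal (p k)) s y
      = ∑' i : ℕ, (ENNReal.ofReal v)^i * P (Fev C s y i) := by
  have hP : ∀ i, P (Fev C s y i)
      = ∑' w : {w : List ℕ // RWAux.Adm s y w ∧ w.length = i},
          ((w : List ℕ).map fun k => ENNReal.ofReal (p k)).prod := by
    intro i
    have : Fev C s y i = {ω | RWAux.Adm s y (claimList C i ω)} :=
      Set.ext fun ω => mem_Fev_iff C h0 hsy
    rw [this]
    exact meas_event P C hC hindep hdist i _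
  simp only [hP]
  have hterm : ∀ i : ℕ,
      (ENNReal.ofReal v)^i * ∑' w : {w : List ℕ // RWAux.Adm s y w ∧ w.length = i},
          ((w : List ℕ).map fun k => ENNReal.ofReal (p k)).prod
      = ∑' w : {w : List ℕ // RWAux.Adm s y w ∧ w.length = i},
          RWAux.wt (ENNReal.ofReal v) (fun k => ENNReal.ofReal (p k)) (w : List ℕ) := by
    intro i
    rw [← ENNReal.tsum_mul_left]
    apply tsum_congr
    rintro ⟨w, hw, hlen⟩
    rw [RWAux.wt]
    simp [hlen]
  simp only [hterm]
  rw [tsum_fiber_length (RWAux.Adm s y)]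
  rfl

lemma Sdiv_prob (hC : ∀ i, Measurable (C i))
    (hindep : ProbabilityTheory.iIndepFun C P)
    (hdist : ∀ i k, P {ω | C i ω = k} = ENNReal.ofReal (p k))
    {x β : ℤ} (hx : x ≤ β) :
    ∑' i : ℕ, (ENNReal.ofReal v)^i * P (Gev C x β i)
      = ∑' k : ℕ, RWAux.Tk (ENNReal.ofReal v) (fun k => ENNReal.ofReal (p k)) x β k := by
  have hP : ∀ i, P (Gev C x β i)
      = ∑' w : {w : List ℕ // (∃ k, RWAux.DivEnd x β k w) ∧ w.length = i},
          ((w : List ℕ).map fun k => ENNReal.ofReal (p k)).prod := by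
    intro i
    have : Gev C x β i = {ω | ∃ k, RWAux.DivEnd x β k (claimList C i ω)} :=
      Set.ext fun ω => mem_Gev_iff C hx
    rw [this]
    exact meas_event P C hC hindep hdist i fun w => ∃ k, RWAux.DivEnd x β k w
  simp only [hP]
  have hterm : ∀ i : ℕ,
      (ENNReal.ofReal v)^i * ∑' w : {w : List ℕ // (∃ k, RWAux.DivEnd x β k w) ∧ w.length = i},
          ((w : List ℕ).map fun k => ENNReal.ofReal (p k)).prod
      = ∑' w : {w : List ℕ // (∃ k, RWAux.DivEnd x β k w) ∧ w.length = i},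
          RWAux.wt (ENNReal.ofReal v) (fun k => ENNReal.ofReal (p k)) (w : List ℕ) := by
    intro i
    rw [← ENNReal.tsum_mul_left]
    apply tsum_congr
    rintro ⟨w, hw, hlen⟩
    rw [RWAux.wt]
    simp [hlen]
  simp only [hterm]
  rw [tsum_fiber_length (fun w => ∃ k, RWAux.DivEnd x β k w), tsum_divEnd_split x β]
  rfl

lemma tsum_P_Fev_le_one (hC : ∀ i, Measurable (C i)) {s y : ℤ} (h0 : 0 ≤ s) (hsy : s ≤ y) :
    ∑' i : ℕ, P (Fev C s y i) ≤ 1 := by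
  rw [← measure_iUnion (Fev_disjoint C s y) (measurable_Fev C hC h0 hsy)]
  exact prob_le_one

lemma A_le_one (hC : ∀ i, Measurable (C i))
    (hindep : ProbabilityTheory.iIndepFun C P)
    (hdist : ∀ i k, P {ω | C i ω = k} = ENNReal.ofReal (p k))
    (hv1 : v ≤ 1) {s y : ℤ} (h0 : 0 ≤ s) (hsy : s ≤ y) :
    RWAux.A (ENNReal.ofReal v) (fun k => ENNReal.ofReal (p k)) s y ≤ 1 := by
  rw [A_prob P C hC hindep hdist h0 hsy]
  refine le_trans (Summable.tsum_le_tsum (fun i => ?_) ENNReal.summable ENNReal.summable)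
    (tsum_P_Fev_le_one P C hC h0 hsy)
  calc (ENNReal.ofReal v)^i * P (Fev C s y i)
      ≤ 1 * P (Fev C s y i) := by
        apply mul_le_mul_left
        exact pow_le_one' (ENNReal.ofReal_le_one.mpr hv1) i
    _ = P (Fev C s y i) := one_mul _

end Sums


section Strict

variable {Ω : Type*} [MeasurableSpace Ω] (P : Measure Ω) [IsProbabilityMeasure P]
  (C : ℕ → Ω → ℕ)

variable {p : ℕ → ℝ} {v : ℝ}

lemma Fev_zero_empty {β : ℤ} : Fev C β (β+1) 0 = (∅ : Set Ω) := by
  ext ω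
  simp only [Fev, Set.mem_setOf_eq, Set.mem_empty_iff_false, iff_false, not_and]
  intro h
  rw [tauPlus_eq_iff] at h
  have h1 := h.1
  simp only [walk_zero] at h1
  omega

lemma walk_le_on_D {b : ℕ} {ω : Ω} (hω : ∀ j < b + 1, 2 ≤ C j ω) :
    ∀ m ≤ b + 1, walk C (b : ℤ) m ω ≤ (b : ℤ) - m := by
  intro m hm
  induction m with
  | zero => simp
  | succ l ih =>
    have h1 := ih (by omega)
    have h2 : 2 ≤ C l ω := hω l (by omega)
    rw [walk_succ]
    have : (2:ℤ) ≤ (C l ω : ℤ) := by exact_mod_cast h2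
    push_cast
    omega

lemma A_lt_one (hC : ∀ i, Measurable (C i))
    (hindep : ProbabilityTheory.iIndepFun C P)
    (hdist : ∀ i k, P {ω | C i ω = k} = ENNReal.ofReal (p k))
    (hnn : ∀ k, 0 ≤ p k) (hv : 0 < v) (hv1 : v ≤ 1) (hdeg : min (p 0 + p 1) v < 1) (b : ℕ) :
    RWAux.A (ENNReal.ofReal v) (fun k => ENNReal.ofReal (p k)) (b : ℤ) ((b : ℤ)+1) < 1 := by
  have h0b : (0:ℤ) ≤ (b:ℤ) := Int.ofNat_nonneg b
  have hsy : (b:ℤ) ≤ (b:ℤ) + 1 := by omega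
  rw [A_prob P C hC hindep hdist h0b hsy]
  rcases lt_or_ge v 1 with hvlt | hvge
  · -- v < 1 : bound by v * P(union)
    have hbound : ∑' i : ℕ, (ENNReal.ofReal v)^i * P (Fev C (b:ℤ) ((b:ℤ)+1) i)
        ≤ ENNReal.ofReal v * ∑' i : ℕ, P (Fev C (b:ℤ) ((b:ℤ)+1) i) := by
      rw [← ENNReal.tsum_mul_left]
      refine Summable.tsum_le_tsum (fun i => ?_) ENNReal.summable ENNReal.summable
      cases i with
      | zero =>
        rw [Fev_zero_empty C]
        simp
      | succ l =>
        apply mul_le_mul_left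
        calc (ENNReal.ofReal v)^(l+1) = ENNReal.ofReal v * (ENNReal.ofReal v)^l := by
              rw [pow_succ]; exact mul_comm _ _
          _ ≤ ENNReal.ofReal v * 1 :=
              mul_le_mul_right (pow_le_one' (ENNReal.ofReal_le_one.mpr hv1) l) _
          _ = ENNReal.ofReal v := mul_one _
    refine lt_of_le_of_lt hbound (lt_of_le_of_lt ?_ (ENNReal.ofReal_lt_one.mpr hvlt))
    calc ENNReal.ofReal v * ∑' i : ℕ, P (Fev C (b:ℤ) ((b:ℤ)+1) i)
        ≤ ENNReal.ofReal v * 1 :=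
          mul_le_mul_right (tsum_P_Fev_le_one P C hC h0b hsy) _
      _ = ENNReal.ofReal v := mul_one _
  · -- v = 1 hence p 0 + p 1 < 1
    have hp01 : p 0 + p 1 < 1 := by
      rcases min_lt_iff.mp hdeg with h | h
      · exact h
      · linarith
    -- the event where the first b+1 claims are all ≥ 2
    set D : Set Ω := ⋂ j ∈ Finset.range (b+1), (C j)⁻¹' {k | 2 ≤ k} with hD
    have hPD : P D = (1 - ENNReal.ofReal (p 0 + p 1))^(b+1) := by
      rw [hD, hindep.meas_biInter (fun j _ => ⟨{k | 2 ≤ k}, trivial, rfl⟩)]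
      have hone : ∀ j : ℕ, P ((C j)⁻¹' {k | 2 ≤ k}) = 1 - ENNReal.ofReal (p 0 + p 1) := by
        intro j
        have hcompl : (C j)⁻¹' {k | 2 ≤ k} = ((C j)⁻¹' {0, 1})ᶜ := by
          ext ω
          simp only [Set.mem_preimage, Set.mem_setOf_eq, Set.mem_compl_iff,
            Set.mem_insert_iff, Set.mem_singleton_iff]
          omega
        have hmeas01 : MeasurableSet ((C j)⁻¹' ({0, 1} : Set ℕ)) := (hC j) trivial
        have hP01 : P ((C j)⁻¹' {0, 1}) = ENNReal.ofReal (p 0 + p 1) := by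
          have hsplit : (C j)⁻¹' ({0, 1} : Set ℕ) = {ω | C j ω = 0} ∪ {ω | C j ω = 1} := by
            ext ω
            simp [Set.mem_preimage]
          rw [hsplit, measure_union ?_ ?_]
          · rw [hdist j 0, hdist j 1, ENNReal.ofReal_add (hnn 0) (hnn 1)]
          · rw [Set.disjoint_left]
            intro ω h1 h2
            simp only [Set.mem_setOf_eq] at h1 h2
            omega
          · exact (hC j) (measurableSet_singleton 1)
        rw [hcompl, measure_compl hmeas01 (measure_ne_top P _), measure_univ, hP01]
      rw [Finset.prod_congr rfl fun j _ => hone j, Finset.prod_const, Finset.card_range]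
    have hPDpos : 0 < P D := by
      rw [hPD]
      apply ENNReal.pow_pos
      rw [tsub_pos_iff_lt]
      exact ENNReal.ofReal_lt_one.mpr hp01
    have hdisj : Disjoint (⋃ i, Fev C (b:ℤ) ((b:ℤ)+1) i) D := by
      rw [Set.disjoint_left]
      rintro ω hmem hd
      obtain ⟨i, hi⟩ := Set.mem_iUnion.mp hmem
      obtain ⟨h1, h2⟩ := hi
      rw [tauPlus_eq_iff] at h1
      rw [cast_lt_tauMinus_iff] at h2
      have hωD : ∀ j < b + 1, 2 ≤ C j ω := by
        intro j hj
        exact Set.mem_iInter₂.mp hd j (Finset.mem_range.mpr hj)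
      have hwalk := walk_le_on_D C hωD
      rcases le_or_gt i (b+1) with hile | hgt
      · have := hwalk i hile
        have hcast : (i : ℤ) ≤ (b:ℤ) + 1 := by exact_mod_cast hile
        have hge := h1.1
        have : (0:ℤ) ≤ (i:ℤ) := Int.ofNat_nonneg i
        omega
      · have h3 := h2 (b+1) (by omega)
        have := hwalk (b+1) le_rfl
        push_cast at this h3
        omega
    have hle : ∑' i : ℕ, (ENNReal.ofReal v)^i * P (Fev C (b:ℤ) ((b:ℤ)+1) i)
        ≤ P (⋃ i, Fev C (b:ℤ) ((b:ℤ)+1) i) := by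
      rw [measure_iUnion (Fev_disjoint C _ _) (measurable_Fev C hC h0b hsy)]
      refine Summable.tsum_le_tsum (fun i => ?_) ENNReal.summable ENNReal.summable
      calc (ENNReal.ofReal v)^i * P (Fev C (b:ℤ) ((b:ℤ)+1) i)
          ≤ 1 * P (Fev C (b:ℤ) ((b:ℤ)+1) i) :=
            mul_le_mul_left (pow_le_one' (ENNReal.ofReal_le_one.mpr hv1) i) _
        _ = _ := one_mul _
    have hPU : P (⋃ i, Fev C (b:ℤ) ((b:ℤ)+1) i) ≤ 1 - P D := by
      have hadd : P (⋃ i, Fev C (b:ℤ) ((b:ℤ)+1) i) + P D ≤ 1 := by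
        rw [← measure_union hdisj (by
          rw [hD]
          exact MeasurableSet.biInter (Set.to_countable _) fun j _ => (hC j) trivial)]
        exact prob_le_one
      exact ENNReal.le_sub_of_add_le_right (measure_ne_top P D) hadd
    refine lt_of_le_of_lt (le_trans hle hPU) ?_
    exact ENNReal.sub_lt_self ENNReal.one_ne_top one_ne_zero hPDpos.ne'

end Strict



section Integrals

variable {Ω : Type*} [MeasurableSpace Ω] (P : Measure Ω) [IsProbabilityMeasure P]
  (C : ℕ → Ω → ℕ)

variable {p : ℕ → ℝ} {v : ℝ}

lemma Eind_eq (hC : ∀ i, Measurable (C i))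
    (hindep : ProbabilityTheory.iIndepFun C P)
    (hdist : ∀ i k, P {ω | C i ω = k} = ENNReal.ofReal (p k))
    (hv : 0 < v) (hv1 : v ≤ 1) {y : ℤ} (hy : 0 ≤ y) :
    Eind P {ω | tauPlus C 0 y ω < tauMinus C 0 (-1) ω}
        (fun ω => v ^ (tauPlus C 0 y ω).toNat)
      = (RWAux.A (ENNReal.ofReal v) (fun k => ENNReal.ofReal (p k)) 0 y).toReal := by
  set E := {ω | tauPlus C 0 y ω < tauMinus C 0 (-1) ω} with hE
  set g : Ω → ℝ≥0∞ :=
    fun ω => ∑' i : ℕ, (Fev C 0 y i).indicator (fun _ => (ENNReal.ofReal v)^i) ω with hg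
  have hpoint : ∀ ω, E.indicator (fun ω => v ^ (tauPlus C 0 y ω).toNat) ω = (g ω).toReal := by
    intro ω
    by_cases hω : ω ∈ E
    · have hlt : tauPlus C 0 y ω ≠ ⊤ := (lt_of_lt_of_le hω le_top).ne
      obtain ⟨i, hi⟩ := WithTop.ne_top_iff_exists.mp hlt
      have hi' : tauPlus C 0 y ω = (i : ℕ∞) := hi.symm
      have hFi : ω ∈ Fev C 0 y i := ⟨hi', by rw [← hi']; exact hω⟩
      have hgω : g ω = (ENNReal.ofReal v)^i := by
        have hrfl : g ω = ∑' i : ℕ, (Fev C 0 y i).indicator (fun _ => (ENNReal.ofReal v)^i) ω := rfl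
        rw [hrfl, tsum_eq_single i]
        · rw [Set.indicator_of_mem hFi]
        · intro j hj
          rw [Set.indicator_of_notMem]
          rintro ⟨h1, _⟩
          apply hj
          rw [hi'] at h1
          exact_mod_cast h1.symm
      rw [hgω, Set.indicator_of_mem hω, hi', ENNReal.toReal_pow, ENNReal.toReal_ofReal hv.le]
      simp
    · rw [Set.indicator_of_notMem hω]
      have hgω : g ω = 0 := by
        have hrfl : g ω = ∑' i : ℕ, (Fev C 0 y i).indicator (fun _ => (ENNReal.ofReal v)^i) ω := rfl
        rw [hrfl, ENNReal.tsum_eq_zero]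
        intro i
        rw [Set.indicator_of_notMem]
        rintro ⟨h1, h2⟩
        exact hω (by rw [hE, Set.mem_setOf_eq, h1]; exact h2)
      rw [hgω]
      simp
  have hmeasg : Measurable g :=
    Measurable.ennreal_tsum fun i =>
      Measurable.indicator measurable_const (measurable_Fev C hC le_rfl hy i)
  have hlint : ∫⁻ ω, g ω ∂P
      = RWAux.A (ENNReal.ofReal v) (fun k => ENNReal.ofReal (p k)) 0 y := by
    rw [hg]
    rw [lintegral_tsum fun i =>
      (Measurable.indicator measurable_const (measurable_Fev C hC le_rfl hy i)).aemeasurable]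
    rw [A_prob P C hC hindep hdist le_rfl hy]
    exact tsum_congr fun i => lintegral_indicator_const (measurable_Fev C hC le_rfl hy i) _
  have hfin : ∫⁻ ω, g ω ∂P ≠ ⊤ := by
    rw [hlint]
    exact (lt_of_le_of_lt (A_le_one P C hC hindep hdist hv1 le_rfl hy) (by simp)).ne
  rw [Eind]
  calc ∫ ω, E.indicator (fun ω => v ^ (tauPlus C 0 y ω).toNat) ω ∂P
      = ∫ ω, (g ω).toReal ∂P := by
        apply integral_congr_ae
        exact Filter.Eventually.of_forall hpoint
    _ = (∫⁻ ω, g ω ∂P).toReal := integral_toReal hmeasg.aemeasurable (ae_lt_top hmeasg hfin)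
    _ = _ := by rw [hlint]

lemma rdiv_bounds {x β : ℤ} (hx : x ≤ β) (i : ℕ) (ω : Ω) :
    0 ≤ rdiv C x β i ω ∧ rdiv C x β i ω ≤ 1 := by
  cases i with
  | zero =>
    rw [rdiv, if_pos rfl, Rdiv_zero]
    omega
  | succ l =>
    have h1 : claimList C l ω = (claimList C (l+1) ω).take l := (claimList_take C (by omega) ω).symm
    have hm := RWAux.RdL_take_mono x β (claimList C (l+1) ω) (Nat.le_succ l)
    have hs := RWAux.RdL_take_le_succ x β (claimList C (l+1) ω) l
    simp only [List.take_of_length_le (le_of_eq (claimList_length C (l+1) ω))] at hm hs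
    rw [rdiv, if_neg (Nat.succ_ne_zero l), Nat.add_sub_cancel, Rdiv_eq_RdL, Rdiv_eq_RdL, h1]
    omega

lemma integral_dividends (hC : ∀ i, Measurable (C i))
    (hindep : ProbabilityTheory.iIndepFun C P)
    (hdist : ∀ i k, P {ω | C i ω = k} = ENNReal.ofReal (p k))
    (hv : 0 < v) (hv1 : v ≤ 1) {x β : ℤ} (hx0 : 0 ≤ x) (hx : x ≤ β) (hβ : 0 ≤ β)
    (hA1 : RWAux.A (ENNReal.ofReal v) (fun k => ENNReal.ofReal (p k)) β (β+1) < 1) :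
    ∫ ω, (∑' i : ℕ, if (i : ℕ∞) < Truin C x β ω then v ^ i * (rdiv C x β i ω : ℝ) else 0) ∂P
      = (RWAux.A (ENNReal.ofReal v) (fun k => ENNReal.ofReal (p k)) x (β+1)
          * (1 - RWAux.A (ENNReal.ofReal v) (fun k => ENNReal.ofReal (p k)) β (β+1))⁻¹).toReal := by
  set vh := ENNReal.ofReal v with hvh
  set ph : ℕ → ℝ≥0∞ := fun k => ENNReal.ofReal (p k) with hph
  set g : Ω → ℝ≥0∞ :=
    fun ω => ∑' i : ℕ, (Gev C x β i).indicator (fun _ => vh^i) ω with hg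
  have hterm : ∀ (i : ℕ) (ω : Ω),
      (if (i : ℕ∞) < Truin C x β ω then v ^ i * (rdiv C x β i ω : ℝ) else 0)
        = ((Gev C x β i).indicator (fun _ => vh^i) ω).toReal := by
    intro i ω
    by_cases hTr : (i : ℕ∞) < Truin C x β ω
    · by_cases hrd : rdiv C x β i ω = 1
      · have hGi : ω ∈ Gev C x β i := ⟨hTr, hrd⟩
        rw [if_pos hTr, Set.indicator_of_mem hGi, hrd, ENNReal.toReal_pow,
          ENNReal.toReal_ofReal hv.le]
        norm_num
      · have hzero : rdiv C x β i ω = 0 := by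
          have := rdiv_bounds C hx i ω
          omega
        rw [if_pos hTr, Set.indicator_of_notMem (fun h => hrd h.2), hzero]
        norm_num
    · rw [if_neg hTr, Set.indicator_of_notMem (fun h => hTr h.1)]
      simp
  have hpoint : ∀ ω,
      (∑' i : ℕ, if (i : ℕ∞) < Truin C x β ω then v ^ i * (rdiv C x β i ω : ℝ) else 0)
        = (g ω).toReal := by
    intro ω
    have hrfl : g ω = ∑' i : ℕ, (Gev C x β i).indicator (fun _ => vh^i) ω := rfl
    have hne : ∀ i : ℕ, (Gev C x β i).indicator (fun _ => vh^i) ω ≠ ⊤ := by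
      intro i
      refine ne_top_of_le_ne_top ?_ (Set.indicator_le_self _ _ _)
      exact (ENNReal.pow_lt_top (lt_of_le_of_lt (ENNReal.ofReal_le_one.mpr hv1) (by simp)) (n := i)).ne
    calc (∑' i : ℕ, if (i : ℕ∞) < Truin C x β ω then v ^ i * (rdiv C x β i ω : ℝ) else 0)
        = ∑' i : ℕ, ((Gev C x β i).indicator (fun _ => vh^i) ω).toReal :=
          tsum_congr fun i => hterm i ω
      _ = (∑' i : ℕ, (Gev C x β i).indicator (fun _ => vh^i) ω).toReal :=
          (ENNReal.tsum_toReal_eq hne).symm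
      _ = (g ω).toReal := by rw [hrfl]
  have hmeasg : Measurable g :=
    Measurable.ennreal_tsum fun i =>
      Measurable.indicator measurable_const (measurable_Gev C hC hx i)
  have hlint : ∫⁻ ω, g ω ∂P = RWAux.A vh ph x (β+1) * (1 - RWAux.A vh ph β (β+1))⁻¹ := by
    rw [hg]
    rw [lintegral_tsum fun i =>
      (Measurable.indicator measurable_const (measurable_Gev C hC hx i)).aemeasurable]
    have h1 : ∀ i : ℕ, ∫⁻ ω, (Gev C x β i).indicator (fun _ => vh^i) ω ∂P
        = vh^i * P (Gev C x β i) :=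
      fun i => lintegral_indicator_const (measurable_Gev C hC hx i) _
    simp only [h1]
    rw [Sdiv_prob P C hC hindep hdist hx]
    have h2 : ∀ k : ℕ, RWAux.Tk vh ph x β k = RWAux.A vh ph x (β+1) * (RWAux.A vh ph β (β+1))^k :=
      RWAux.Tk_formula vh ph hx hβ
    refine (tsum_congr h2).trans ?_
    rw [ENNReal.tsum_mul_left, ENNReal.tsum_geometric]
  have hfin : ∫⁻ ω, g ω ∂P ≠ ⊤ := by
    rw [hlint]
    apply ENNReal.mul_ne_top
    · exact (lt_of_le_of_lt (A_le_one P C hC hindep hdist hv1 hx0 (by omega)) (by simp)).ne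
    · rw [Ne, ENNReal.inv_eq_top]
      rw [← Ne, ← pos_iff_ne_zero, tsub_pos_iff_lt]
      exact hA1
  calc ∫ ω, (∑' i : ℕ, if (i : ℕ∞) < Truin C x β ω then v ^ i * (rdiv C x β i ω : ℝ) else 0) ∂P
      = ∫ ω, (g ω).toReal ∂P := by
        apply integral_congr_ae
        exact Filter.Eventually.of_forall hpoint
    _ = (∫⁻ ω, g ω ∂P).toReal := integral_toReal hmeasg.aemeasurable (ae_lt_top hmeasg hfin)
    _ = _ := by rw [hlint]

end Integrals

/-- Value of the barrier dividend policy: `W_v` is strictly increasing at the barrier and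
the expected discounted dividends until ruin equal `W_v(x)/(W_v(b+1) - W_v(b))` for `x ≤ b`. -/
theorem deFinetti_barrier_value
    (P : Measure Ω) [IsProbabilityMeasure P]
    (C : ℕ → Ω → ℕ) (p : ℕ → ℝ)
    (hC : ∀ i, Measurable (C i))
    (hindep : ProbabilityTheory.iIndepFun C P)
    (hdist : ∀ i k, P {ω | C i ω = k} = ENNReal.ofReal (p k))
    (hnn : ∀ k, 0 ≤ p k) (hsum : ∑' k, p k = 1) (hp0 : 0 < p 0)
    (v : ℝ) (hv : v ∈ Set.Ioc (0 : ℝ) 1) (hdeg : min (p 0 + p 1) v < 1)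
    (b : ℕ) (x : ℤ) (hx : x ≤ (b : ℤ)) :
    W P C v (p 0) b < W P C v (p 0) ((b : ℤ) + 1) ∧
    ∫ ω, (∑' i : ℕ, if (i : ℕ∞) < Truin C x b ω then v ^ i * (rdiv C x b i ω : ℝ) else 0) ∂P
      = W P C v (p 0) x / (W P C v (p 0) ((b : ℤ) + 1) - W P C v (p 0) b) := by
  obtain ⟨hv0, hv1⟩ := hv
  set vh := ENNReal.ofReal v with hvh
  set ph : ℕ → ℝ≥0∞ := fun k => ENNReal.ofReal (p k) with hph
  have hvh0 : (0:ℝ≥0∞) < vh := ENNReal.ofReal_pos.mpr hv0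
  have hph0 : (0:ℝ≥0∞) < ph 0 := ENNReal.ofReal_pos.mpr hp0
  have h0b : (0:ℤ) ≤ (b:ℤ) := Int.ofNat_nonneg b
  -- scale-function values
  have hW : ∀ y : ℤ, 0 ≤ y →
      W P C v (p 0) y = 1 / (p 0 * (RWAux.A vh ph 0 y).toReal) := by
    intro y hy
    rw [W, if_pos hy, Eind_eq P C hC hindep hdist hv0 hv1 hy]
  -- basic facts about the A-values
  have hAle : ∀ s y : ℤ, 0 ≤ s → s ≤ y → RWAux.A vh ph s y ≤ 1 := fun s y h1 h2 =>
    A_le_one P C hC hindep hdist hv1 h1 h2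
  have hAne : ∀ s y : ℤ, 0 ≤ s → s ≤ y → RWAux.A vh ph s y ≠ ⊤ := fun s y h1 h2 =>
    (lt_of_le_of_lt (hAle s y h1 h2) (by simp)).ne
  have hApos : ∀ s y : ℤ, 0 ≤ s → s ≤ y → 0 < (RWAux.A vh ph s y).toReal := fun s y h1 h2 =>
    ENNReal.toReal_pos (RWAux.A_pos hvh0 hph0 h1 h2).ne' (hAne s y h1 h2)
  have hAq : RWAux.A vh ph (b:ℤ) ((b:ℤ)+1) < 1 :=
    A_lt_one P C hC hindep hdist hnn hv0 hv1 hdeg b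
  set q := (RWAux.A vh ph (b:ℤ) ((b:ℤ)+1)).toReal with hqdef
  set βR := (RWAux.A vh ph 0 (b:ℤ)).toReal with hβRdef
  set γ := (RWAux.A vh ph 0 ((b:ℤ)+1)).toReal with hγdef
  have hq1 : q < 1 := by
    have := (ENNReal.toReal_lt_toReal (hAne _ _ h0b (by omega)) ENNReal.one_ne_top).mpr hAq
    simpa using this
  have hq0 : 0 < q := hApos _ _ h0b (by omega)
  have hβR0 : 0 < βR := hApos _ _ le_rfl h0b
  have hγβq : γ = βR * q := by
    rw [hγdef, hβRdef, hqdef, ← ENNReal.toReal_mul, ← RWAux.A_mul vh ph h0b (by omega)]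
  have hγ0 : 0 < γ := by rw [hγβq]; positivity
  -- part 1
  have hpart1 : W P C v (p 0) (b:ℤ) < W P C v (p 0) ((b:ℤ)+1) := by
    rw [hW (b:ℤ) h0b, hW ((b:ℤ)+1) (by omega)]
    rw [← hβRdef, ← hγdef]
    apply one_div_lt_one_div_of_lt (by positivity)
    calc p 0 * γ = p 0 * (βR * q) := by rw [hγβq]
      _ < p 0 * (βR * 1) := by
          apply mul_lt_mul_of_pos_left _ hp0
          exact mul_lt_mul_of_pos_left hq1 hβR0
      _ = p 0 * βR := by ring
  refine ⟨hpart1, ?_⟩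
  rcases lt_or_ge x 0 with hx0 | hx0
  · -- ruined immediately: both sides vanish
    have hTruin : ∀ ω, Truin C x (b:ℤ) ω = 0 := by
      intro ω
      apply le_antisymm _ zero_le
      have h0mem : (0:ℕ) ∈ {n : ℕ | walk C x n ω - Rdiv C x (b:ℤ) n ω ≤ -1} := by
        simp only [Set.mem_setOf_eq, walk_zero, Rdiv_zero]
        omega
      exact sInf_le ⟨0, h0mem, rfl⟩
    have hint : ∀ ω,
        (∑' i : ℕ, if (i : ℕ∞) < Truin C x (b:ℤ) ω then v ^ i * (rdiv C x (b:ℤ) i ω : ℝ) else 0)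
          = 0 := by
      intro ω
      have hterm0 : ∀ i : ℕ,
          (if (i : ℕ∞) < Truin C x (b:ℤ) ω then v ^ i * (rdiv C x (b:ℤ) i ω : ℝ) else 0) = 0 :=
        fun i => if_neg (by rw [hTruin ω]; exact not_lt_of_ge zero_le)
      calc (∑' i : ℕ, if (i : ℕ∞) < Truin C x (b:ℤ) ω
              then v ^ i * (rdiv C x (b:ℤ) i ω : ℝ) else 0)
          = ∑' _ : ℕ, (0:ℝ) := tsum_congr hterm0
        _ = 0 := tsum_zero
    calc ∫ ω, (∑' i : ℕ, if (i : ℕ∞) < Truin C x (b:ℤ) ω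
            then v ^ i * (rdiv C x (b:ℤ) i ω : ℝ) else 0) ∂P
        = ∫ (_ : Ω), (0:ℝ) ∂P := by
          apply integral_congr_ae
          exact Filter.Eventually.of_forall hint
      _ = 0 := integral_zero _ _
      _ = W P C v (p 0) x / (W P C v (p 0) ((b:ℤ)+1) - W P C v (p 0) (b:ℤ)) := by
          rw [W, if_neg (by omega), zero_div]
  · -- main case
    set α := (RWAux.A vh ph 0 x).toReal with hαdef
    set t := (RWAux.A vh ph x ((b:ℤ)+1)).toReal with htdef
    have hα0 : 0 < α := hApos _ _ le_rfl hx0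
    have ht0 : 0 < t := hApos _ _ hx0 (by omega)
    have hγαt : γ = α * t := by
      rw [hγdef, hαdef, htdef, ← ENNReal.toReal_mul, ← RWAux.A_mul vh ph hx0 (by omega)]
    have hLHS : ∫ ω, (∑' i : ℕ, if (i : ℕ∞) < Truin C x (b:ℤ) ω
          then v ^ i * (rdiv C x (b:ℤ) i ω : ℝ) else 0) ∂P = t * (1 - q)⁻¹ := by
      rw [integral_dividends P C hC hindep hdist hv0 hv1 hx0 hx h0b hAq]
      rw [ENNReal.toReal_mul, ENNReal.toReal_inv, ← htdef]
      congr 2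
      rw [ENNReal.toReal_sub_of_le hAq.le ENNReal.one_ne_top, ← hqdef]
      simp
    rw [hLHS, hW x hx0, hW (b:ℤ) h0b, hW ((b:ℤ)+1) (by omega), ← hαdef, ← hβRdef, ← hγdef]
    have hD : 1 / (p 0 * γ) - 1 / (p 0 * βR) = (1 - q) / (p 0 * γ) := by
      rw [hγβq]
      field_simp
    rw [hD]
    have h1q : (0:ℝ) < 1 - q := by linarith
    rw [div_div_div_eq]
    field_simp
    rw [hγαt]
    ring

end RW
end
end
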